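/- arXiv:2106.07143 — 4 statements merged into one kernel-verified Lean document; each statement's English description precedes it below -/
import Mathlib

section
/- (Riesz composition formula) Let n ∈ ℕ and α, β ∈ (0, n) with α + β < n. Then for all x, w ∈ ℝⁿ with x ≠ w, ∫_{ℝⁿ} |x - y|^{α-n} |y - w|^{β-n} dy = [γ(α,n) γ(β,n)/γ(α+β,n)] |x - w|^{α+β-n}, where γ(s,n) = π^{n/2} 2^s Γ(s/2)/Γ((n-s)/2). -/
open MeasureTheory Real Set
open scoped ENNReal

/-- `γ(s,n) = π^(n/2) 2^s Γ(s/2)/Γ((n-s)/2)`. -/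
noncomputable def rieszGamma (s : ℝ) (n : ℕ) : ℝ :=
  Real.pi ^ ((n : ℝ) / 2) * 2 ^ s * Real.Gamma (s / 2) / Real.Gamma (((n : ℝ) - s) / 2)

lemma integrableOn_rpow_mul_exp_neg_mul' {s c : ℝ} (hs : 0 < s) (hc : 0 < c) :
    IntegrableOn (fun t : ℝ => t ^ (s - 1) * Real.exp (-(c * t))) (Ioi 0) := by
  have h0 := Real.GammaIntegral_convergent hs
  have h1 : IntegrableOn (fun x : ℝ => Real.exp (-(c * x)) * (c * x) ^ (s - 1)) (Ioi 0) := by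
    have := (integrableOn_Ioi_comp_mul_left_iff
      (fun x : ℝ => Real.exp (-x) * x ^ (s - 1)) 0 hc).mpr (by simpa using h0)
    simpa using this
  have h2 : IntegrableOn (fun x : ℝ =>
      c ^ (1 - s) * (Real.exp (-(c * x)) * (c * x) ^ (s - 1))) (Ioi 0) := h1.const_mul _
  refine h2.congr_fun (fun x hx => ?_) measurableSet_Ioi
  have hx' : (0:ℝ) < x := hx
  beta_reduce
  rw [Real.mul_rpow hc.le hx'.le]
  have hone : c ^ (1 - s) * c ^ (s - 1) = 1 := by
    rw [← Real.rpow_add hc]; norm_num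
  linear_combination (Real.exp (-(c * x)) * x ^ (s - 1)) * hone

lemma gammaLintegral {s c : ℝ} (hs : 0 < s) (hc : 0 < c) :
    ∫⁻ t in Ioi (0:ℝ), ENNReal.ofReal (t ^ (s - 1) * Real.exp (-(c * t)))
      = ENNReal.ofReal (Real.Gamma s * c ^ (-s)) := by
  rw [← ofReal_integral_eq_lintegral_ofReal (integrableOn_rpow_mul_exp_neg_mul' hs hc)
    ((ae_restrict_iff' measurableSet_Ioi).mpr (ae_of_all _ fun t ht => by
      have : (0:ℝ) < t := ht; positivity))]
  rw [integral_rpow_mul_exp_neg_mul_Ioi hs hc]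
  rw [one_div, ← Real.rpow_neg_one c, ← Real.rpow_mul hc.le, neg_one_mul, mul_comm]

lemma lintegral_Ioi_scale {c : ℝ} (hc : 0 < c) (g : ℝ → ℝ≥0∞) :
    ∫⁻ u in Ioi (0:ℝ), g u = ENNReal.ofReal c * ∫⁻ v in Ioi (0:ℝ), g (c * v) := by
  have hemb : MeasurableEmbedding (fun x : ℝ => c * x) :=
    (Homeomorph.mulLeft₀ c hc.ne').measurableEmbedding
  have hpre : (fun x : ℝ => c * x) ⁻¹' (Ioi 0) = Ioi 0 := by
    ext x; simp [mul_pos_iff_of_pos_left, hc]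
  have hmap : Measure.map (fun x : ℝ => c * x) (volume.restrict (Ioi 0))
      = ENNReal.ofReal c⁻¹ • volume.restrict (Ioi 0) := by
    rw [← hpre, ← Measure.restrict_map (by fun_prop) measurableSet_Ioi,
      Real.map_volume_mul_left hc.ne', hpre, Measure.restrict_smul,
      abs_of_pos (inv_pos.mpr hc)]
  calc ∫⁻ u in Ioi (0:ℝ), g u
      = ENNReal.ofReal c * (ENNReal.ofReal c⁻¹ * ∫⁻ u in Ioi (0:ℝ), g u) := by
        rw [← mul_assoc, ← ENNReal.ofReal_mul hc.le, mul_inv_cancel₀ hc.ne',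
          ENNReal.ofReal_one, one_mul]
    _ = ENNReal.ofReal c * ∫⁻ u, g u ∂(ENNReal.ofReal c⁻¹ • volume.restrict (Ioi 0)) := by
        rw [lintegral_smul_measure, smul_eq_mul]
    _ = ENNReal.ofReal c * ∫⁻ v in Ioi (0:ℝ), g (c * v) := by
        rw [← hmap, hemb.lintegral_map]

lemma integrable_rexp_neg_mul_sq_norm' {n : ℕ} {c : ℝ} (hc : 0 < c) :
    Integrable (fun y : EuclideanSpace ℝ (Fin n) => Real.exp (-(c * ‖y‖ ^ 2))) := by
  have h := (GaussianFourier.integrable_cexp_neg_mul_sq_norm_add (V := EuclideanSpace ℝ (Fin n))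
    (b := (c : ℂ)) (by simpa using hc) 0 0).norm
  refine h.congr (ae_of_all _ fun y => ?_)
  simp only [zero_mul, add_zero, Complex.norm_exp]
  congr 1
  rw [show (-(c:ℂ) * (‖y‖:ℂ) ^ 2) = ((-(c * ‖y‖^2) : ℝ) : ℂ) by push_cast; ring,
    Complex.ofReal_re]

lemma gaussLintegral {n : ℕ} {c : ℝ} (hc : 0 < c) :
    ∫⁻ y : EuclideanSpace ℝ (Fin n), ENNReal.ofReal (Real.exp (-(c * ‖y‖ ^ 2)))
      = ENNReal.ofReal ((Real.pi / c) ^ ((n : ℝ) / 2)) := by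
  rw [← ofReal_integral_eq_lintegral_ofReal (integrable_rexp_neg_mul_sq_norm' hc)
    (ae_of_all _ fun y => (Real.exp_pos _).le)]
  congr 1
  have := GaussianFourier.integral_rexp_neg_mul_sq_norm (V := EuclideanSpace ℝ (Fin n)) hc
  simp only [neg_mul] at this ⊢
  rw [this, finrank_euclideanSpace_fin]

lemma completeSquareGauss {n : ℕ} {t u : ℝ} (ht : 0 < t) (hu : 0 < u)
    (z : EuclideanSpace ℝ (Fin n)) :
    ∫⁻ y : EuclideanSpace ℝ (Fin n),
        ENNReal.ofReal (Real.exp (-(Real.pi * t * ‖z - y‖ ^ 2 + Real.pi * u * ‖y‖ ^ 2)))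
      = ENNReal.ofReal ((t + u) ^ (-((n : ℝ) / 2))
          * Real.exp (-(Real.pi * (t * u / (t + u)) * ‖z‖ ^ 2))) := by
  have htu : (0:ℝ) < t + u := by linarith
  set m : EuclideanSpace ℝ (Fin n) := (t / (t + u)) • z with hm
  have key : ∀ y : EuclideanSpace ℝ (Fin n),
      Real.pi * t * ‖z - y‖ ^ 2 + Real.pi * u * ‖y‖ ^ 2
        = Real.pi * (t + u) * ‖y - m‖ ^ 2 + Real.pi * (t * u / (t + u)) * ‖z‖ ^ 2 := by
    intro y
    have h1 : ‖z - y‖ ^ 2 = ‖z‖ ^ 2 - 2 * inner ℝ z y + ‖y‖ ^ 2 :=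
      norm_sub_sq_real z y
    have h2 : ‖y - m‖ ^ 2 = ‖y‖ ^ 2 - 2 * inner ℝ y m + ‖m‖ ^ 2 :=
      norm_sub_sq_real y m
    have h3 : (inner ℝ y m : ℝ) = (t / (t + u)) * inner ℝ y z := by
      rw [hm, real_inner_smul_right]
    have h4 : ‖m‖ ^ 2 = (t / (t + u)) ^ 2 * ‖z‖ ^ 2 := by
      rw [hm, norm_smul, mul_pow]
      congr 1
      rw [Real.norm_eq_abs, sq_abs]
    have h5 : (inner ℝ z y : ℝ) = inner ℝ y z := real_inner_comm y z
    rw [h1, h2, h3, h4, h5]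
    field_simp
    ring
  simp_rw [key]
  simp_rw [neg_add, Real.exp_add, ENNReal.ofReal_mul (Real.exp_nonneg _)]
  rw [lintegral_mul_const' _ _ ENNReal.ofReal_ne_top]
  have htrans : ∫⁻ y : EuclideanSpace ℝ (Fin n),
      ENNReal.ofReal (Real.exp (-(Real.pi * (t + u) * ‖y - m‖ ^ 2)))
      = ∫⁻ y : EuclideanSpace ℝ (Fin n),
      ENNReal.ofReal (Real.exp (-(Real.pi * (t + u) * ‖y‖ ^ 2))) := by
    simp_rw [sub_eq_add_neg]
    exact lintegral_add_right_eq_self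
      (fun y => ENNReal.ofReal (Real.exp (-(Real.pi * (t + u) * ‖y‖ ^ 2)))) (-m)
  rw [htrans]
  have : Real.pi * (t + u) * 1 = Real.pi * (t + u) := by ring
  rw [show (fun y : EuclideanSpace ℝ (Fin n) =>
      ENNReal.ofReal (Real.exp (-(Real.pi * (t + u) * ‖y‖ ^ 2)))) = fun y =>
      ENNReal.ofReal (Real.exp (-((Real.pi * (t + u)) * ‖y‖ ^ 2))) by rfl]
  rw [gaussLintegral (by positivity)]
  rw [← ENNReal.ofReal_mul (by positivity)]
  congr 1
  have hπ : Real.pi / (Real.pi * (t + u)) = (t + u)⁻¹ := by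
    field_simp
  rw [hπ, ← Real.rpow_neg_one (t+u), ← Real.rpow_mul htu.le]
  norm_num

lemma subordination {s r : ℝ} (hs : 0 < s) (hr : 0 < r) :
    ENNReal.ofReal (r ^ (-(2 * s)))
      = ENNReal.ofReal (Real.pi ^ s / Real.Gamma s)
        * ∫⁻ t in Ioi (0:ℝ), ENNReal.ofReal (t ^ (s - 1) * Real.exp (-(Real.pi * r ^ 2 * t))) := by
  rw [gammaLintegral hs (by positivity), ← ENNReal.ofReal_mul (by positivity)]
  congr 1
  have hexp : (Real.pi * r ^ 2) ^ (-s) = Real.pi ^ (-s) * r ^ (-(2 * s)) := by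
    rw [Real.mul_rpow Real.pi_pos.le (by positivity), ← Real.rpow_natCast r 2,
      ← Real.rpow_mul hr.le]
    norm_num
  rw [hexp, Real.rpow_neg Real.pi_pos.le]
  have h1 : Real.Gamma s ≠ 0 := (Real.Gamma_pos_of_pos hs).ne'
  have h2 : Real.pi ^ s ≠ 0 := (Real.rpow_pos_of_pos Real.pi_pos s).ne'
  field_simp

lemma betaLintegral {p q : ℝ} (hp : 0 < p) (hq : 0 < q) :
    ∫⁻ v in Ioi (0:ℝ), ENNReal.ofReal (v ^ (p - 1) * (1 + v) ^ (-(p + q)))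
      = ENNReal.ofReal (Real.Gamma p * Real.Gamma q / Real.Gamma (p + q)) := by
  have hΓ : (0:ℝ) < Real.Gamma (p + q) := Real.Gamma_pos_of_pos (by linarith)
  have key : ∀ v ∈ Ioi (0:ℝ),
      ENNReal.ofReal (v ^ (p - 1) * (1 + v) ^ (-(p + q)))
        = (ENNReal.ofReal (Real.Gamma (p + q)))⁻¹
          * ∫⁻ t in Ioi (0:ℝ),
              ENNReal.ofReal (v ^ (p - 1) * (t ^ (p + q - 1) * Real.exp (-((1 + v) * t)))) := by
    intro v hv
    have hv' : (0:ℝ) < v := hv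
    have h1v : (0:ℝ) < 1 + v := by linarith
    simp_rw [ENNReal.ofReal_mul (Real.rpow_nonneg hv'.le _)]
    rw [lintegral_const_mul' _ _ ENNReal.ofReal_ne_top,
      gammaLintegral (by linarith) h1v, ENNReal.ofReal_mul hΓ.le]
    rw [← mul_assoc, mul_comm ((ENNReal.ofReal (Real.Gamma (p+q)))⁻¹), mul_assoc, ← mul_assoc
      (ENNReal.ofReal (Real.Gamma (p+q)))⁻¹, ENNReal.inv_mul_cancel
      (by simp [hΓ]) ENNReal.ofReal_ne_top, one_mul]
  rw [setLIntegral_congr_fun measurableSet_Ioi key,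
    lintegral_const_mul' _ _ (by simp [hΓ])]
  have hswap : ∫⁻ v in Ioi (0:ℝ), ∫⁻ t in Ioi (0:ℝ),
      ENNReal.ofReal (v ^ (p - 1) * (t ^ (p + q - 1) * Real.exp (-((1 + v) * t))))
      = ∫⁻ t in Ioi (0:ℝ), ∫⁻ v in Ioi (0:ℝ),
      ENNReal.ofReal (v ^ (p - 1) * (t ^ (p + q - 1) * Real.exp (-((1 + v) * t)))) := by
    apply lintegral_lintegral_swap
    apply Measurable.aemeasurable
    fun_prop
  rw [hswap]
  have inner : ∀ t ∈ Ioi (0:ℝ), (∫⁻ v in Ioi (0:ℝ),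
      ENNReal.ofReal (v ^ (p - 1) * (t ^ (p + q - 1) * Real.exp (-((1 + v) * t)))))
      = ENNReal.ofReal (Real.Gamma p * (t ^ (q - 1) * Real.exp (-(1 * t)))) := by
    intro t ht
    have ht' : (0:ℝ) < t := ht
    have : ∀ v ∈ Ioi (0:ℝ), ENNReal.ofReal (v ^ (p - 1) * (t ^ (p + q - 1) * Real.exp (-((1 + v) * t))))
        = ENNReal.ofReal (t ^ (p + q - 1) * Real.exp (-t)) * ENNReal.ofReal (v ^ (p - 1) * Real.exp (-(t * v))) := by
      intro v hv
      have hv' : (0:ℝ) < v := hv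
      rw [← ENNReal.ofReal_mul (by positivity)]
      congr 1
      rw [show -((1 + v) * t) = -t + -(t * v) by ring, Real.exp_add]
      ring
    rw [setLIntegral_congr_fun measurableSet_Ioi this,
      lintegral_const_mul' _ _ ENNReal.ofReal_ne_top, gammaLintegral hp ht',
      ← ENNReal.ofReal_mul (by positivity)]
    congr 1
    rw [show t ^ (p + q - 1) * Real.exp (-t) * (Real.Gamma p * t ^ (-p))
        = Real.Gamma p * (t ^ (p + q - 1) * t ^ (-p) * Real.exp (-t)) by ring,
      ← Real.rpow_add ht', show p + q - 1 + -p = q - 1 by ring, one_mul]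
  rw [setLIntegral_congr_fun measurableSet_Ioi inner]
  simp_rw [ENNReal.ofReal_mul (Real.Gamma_pos_of_pos hp).le]
  rw [lintegral_const_mul' _ _ ENNReal.ofReal_ne_top, gammaLintegral hq one_pos]
  rw [ENNReal.ofReal_div_of_pos hΓ, ← ENNReal.ofReal_mul (Real.Gamma_pos_of_pos hp).le,
    ENNReal.div_eq_inv_mul]
  congr 2
  norm_num [Real.one_rpow]

lemma rieszCore {n : ℕ} {α β : ℝ}
    (hα : α ∈ Set.Ioo (0 : ℝ) n) (hβ : β ∈ Set.Ioo (0 : ℝ) n) (hαβ : α + β < n)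
    (z : EuclideanSpace ℝ (Fin n)) (hz : z ≠ 0) :
    ∫⁻ y : EuclideanSpace ℝ (Fin n),
        ENNReal.ofReal (‖z - y‖ ^ (α - (n : ℝ)) * ‖y‖ ^ (β - (n : ℝ)))
      = ENNReal.ofReal ((Real.pi ^ ((n : ℝ) / 2) * Real.Gamma (((n : ℝ) - α - β) / 2)
            * Real.Gamma (α / 2) * Real.Gamma (β / 2)
          / (Real.Gamma (((n : ℝ) - α) / 2) * Real.Gamma (((n : ℝ) - β) / 2)
            * Real.Gamma ((α + β) / 2)))
          * ‖z‖ ^ (α + β - (n : ℝ))) := by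
  obtain ⟨hα0, hαn⟩ := hα
  obtain ⟨hβ0, hβn⟩ := hβ
  have hn : 0 < n := by exact_mod_cast hα0.trans hαn
  haveI : Nonempty (Fin n) := Fin.pos_iff_nonempty.mp hn
  set a : ℝ := ((n : ℝ) - α) / 2 with ha_def
  set b : ℝ := ((n : ℝ) - β) / 2 with hb_def
  set q : ℝ := ((n : ℝ) - α - β) / 2 with hq_def
  have ha : 0 < a := by simp only [ha_def]; linarith
  have hb : 0 < b := by simp only [hb_def]; linarith
  have hq : 0 < q := by simp only [hq_def]; linarith
  have hα2 : 0 < α / 2 := by linarith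
  have hβ2 : 0 < β / 2 := by linarith
  have hr : (0:ℝ) < ‖z‖ := norm_pos_iff.mpr hz
  set r : ℝ := ‖z‖ with hr_def
  set F : ℝ → EuclideanSpace ℝ (Fin n) → ℝ≥0∞ := fun t y =>
    ENNReal.ofReal (t ^ (a - 1) * Real.exp (-(Real.pi * ‖z - y‖ ^ 2 * t))) with hF
  set G : ℝ → EuclideanSpace ℝ (Fin n) → ℝ≥0∞ := fun u y =>
    ENNReal.ofReal (u ^ (b - 1) * Real.exp (-(Real.pi * ‖y‖ ^ 2 * u))) with hG
  set K : ℝ≥0∞ := ENNReal.ofReal (Real.pi ^ a / Real.Gamma a)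
    * ENNReal.ofReal (Real.pi ^ b / Real.Gamma b) with hK
  have hKtop : K ≠ ∞ := by
    simp only [hK]
    exact ENNReal.mul_ne_top ENNReal.ofReal_ne_top ENNReal.ofReal_ne_top
  -- Step 1: subordination a.e.
  have hae : ∀ᵐ y : EuclideanSpace ℝ (Fin n), y ≠ z ∧ y ≠ 0 := by
    have h1 : (volume : Measure (EuclideanSpace ℝ (Fin n))) ({z} ∪ {0}) = 0 := by
      rw [measure_union_null (measure_singleton z) (measure_singleton 0)]
    filter_upwards [measure_eq_zero_iff_ae_notMem.mp h1] with y hy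
    simp only [Set.mem_union, Set.mem_singleton_iff, not_or] at hy
    exact hy
  have step1 : ∫⁻ y : EuclideanSpace ℝ (Fin n),
      ENNReal.ofReal (‖z - y‖ ^ (α - (n : ℝ)) * ‖y‖ ^ (β - (n : ℝ)))
      = ∫⁻ y : EuclideanSpace ℝ (Fin n),
        K * ((∫⁻ t in Ioi (0:ℝ), F t y) * (∫⁻ u in Ioi (0:ℝ), G u y)) := by
    refine lintegral_congr_ae ?_
    filter_upwards [hae] with y hy
    have h1 : (0:ℝ) < ‖z - y‖ := norm_pos_iff.mpr (sub_ne_zero.mpr (Ne.symm hy.1))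
    have h2 : (0:ℝ) < ‖y‖ := norm_pos_iff.mpr hy.2
    rw [show α - (n:ℝ) = -(2 * a) by simp only [ha_def]; ring,
      show β - (n:ℝ) = -(2 * b) by simp only [hb_def]; ring,
      ENNReal.ofReal_mul (Real.rpow_nonneg h1.le _),
      subordination ha h1, subordination hb h2, hK, hF, hG]
    ring
  rw [step1, lintegral_const_mul' _ _ hKtop]
  -- Step 3: product of integrals as double integral
  have step3 : ∀ y : EuclideanSpace ℝ (Fin n),
      (∫⁻ t in Ioi (0:ℝ), F t y) * (∫⁻ u in Ioi (0:ℝ), G u y)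
      = ∫⁻ t in Ioi (0:ℝ), ∫⁻ u in Ioi (0:ℝ), F t y * G u y := by
    intro y
    rw [← lintegral_mul_const _ (by simp only [hF]; fun_prop)]
    exact lintegral_congr fun t => (lintegral_const_mul' _ _ ENNReal.ofReal_ne_top).symm
  simp_rw [step3]
  -- Step 4: swap y and t
  have step4 : ∫⁻ y : EuclideanSpace ℝ (Fin n), ∫⁻ t in Ioi (0:ℝ),
        ∫⁻ u in Ioi (0:ℝ), F t y * G u y
      = ∫⁻ t in Ioi (0:ℝ), ∫⁻ y : EuclideanSpace ℝ (Fin n),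
        ∫⁻ u in Ioi (0:ℝ), F t y * G u y := by
    refine lintegral_lintegral_swap ?_
    apply Measurable.aemeasurable
    apply Measurable.lintegral_prod_right'
      (f := fun (p : (EuclideanSpace ℝ (Fin n) × ℝ) × ℝ) => F p.1.2 p.1.1 * G p.2 p.1.1)
    simp only [hF, hG]
    fun_prop
  rw [step4]
  -- Step 5: swap y and u inside
  have step5 : ∀ t : ℝ, ∫⁻ y : EuclideanSpace ℝ (Fin n), ∫⁻ u in Ioi (0:ℝ), F t y * G u y
      = ∫⁻ u in Ioi (0:ℝ), ∫⁻ y : EuclideanSpace ℝ (Fin n), F t y * G u y := by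
    intro t
    refine lintegral_lintegral_swap ?_
    apply Measurable.aemeasurable
    simp only [hF, hG]
    fun_prop
  simp_rw [step5]
  -- Step 6: inner Gaussian integral over y
  set c0 : ℝ → ℝ → ℝ := fun t u => t ^ (a-1) * u ^ (b-1)
    * ((t + u) ^ (-((n:ℝ)/2)) * Real.exp (-(Real.pi * (t * u / (t + u)) * r ^ 2))) with hc0
  have step6 : ∀ t ∈ Ioi (0:ℝ), ∀ u ∈ Ioi (0:ℝ),
      (∫⁻ y : EuclideanSpace ℝ (Fin n), F t y * G u y) = ENNReal.ofReal (c0 t u) := by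
    intro t ht u hu
    have ht' : (0:ℝ) < t := ht
    have hu' : (0:ℝ) < u := hu
    have hpt : ∀ y : EuclideanSpace ℝ (Fin n), F t y * G u y
        = ENNReal.ofReal (t ^ (a-1) * u ^ (b-1))
          * ENNReal.ofReal (Real.exp (-(Real.pi * t * ‖z - y‖ ^ 2 + Real.pi * u * ‖y‖ ^ 2))) := by
      intro y
      rw [hF, hG, ← ENNReal.ofReal_mul (by positivity), ← ENNReal.ofReal_mul (by positivity)]
      congr 1
      rw [show -(Real.pi * t * ‖z - y‖ ^ 2 + Real.pi * u * ‖y‖ ^ 2)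
        = -(Real.pi * ‖z - y‖ ^ 2 * t) + -(Real.pi * ‖y‖ ^ 2 * u) by ring, Real.exp_add]
      ring
    simp_rw [hpt]
    rw [lintegral_const_mul' _ _ ENNReal.ofReal_ne_top, completeSquareGauss ht' hu' z,
      ← ENNReal.ofReal_mul (by positivity), hc0]
  rw [setLIntegral_congr_fun measurableSet_Ioi (fun t ht =>
    setLIntegral_congr_fun measurableSet_Ioi (fun u hu => step6 t ht u hu))]
  -- Step 7+8: substitute u = t * v
  have step78 : ∀ t ∈ Ioi (0:ℝ), ∫⁻ u in Ioi (0:ℝ), ENNReal.ofReal (c0 t u)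
      = ∫⁻ v in Ioi (0:ℝ), ENNReal.ofReal ((v ^ (b-1) * (1+v) ^ (-((n:ℝ)/2)))
          * (t ^ (q-1) * Real.exp (-(Real.pi * (v/(1+v)) * r ^ 2 * t)))) := by
    intro t ht
    have ht' : (0:ℝ) < t := ht
    rw [lintegral_Ioi_scale ht' (fun u => ENNReal.ofReal (c0 t u)),
      ← lintegral_const_mul' _ _ ENNReal.ofReal_ne_top]
    refine setLIntegral_congr_fun measurableSet_Ioi (fun v hv => ?_)
    have hv' : (0:ℝ) < v := hv
    have h1v : (0:ℝ) < 1 + v := by linarith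
    rw [← ENNReal.ofReal_mul ht'.le]
    congr 1
    rw [hc0]
    have e1 : (t * v) ^ (b-1) = t ^ (b-1) * v ^ (b-1) := Real.mul_rpow ht'.le hv'.le
    have e2 : t + t * v = t * (1 + v) := by ring
    have e3 : (t * (1 + v)) ^ (-((n:ℝ)/2)) = t ^ (-((n:ℝ)/2)) * (1+v) ^ (-((n:ℝ)/2)) :=
      Real.mul_rpow ht'.le h1v.le
    have e4 : t * (t * v) / (t * (1 + v)) = v / (1 + v) * t := by
      field_simp
    have e5 : t * (t ^ (a-1) * (t ^ (b-1)) * t ^ (-((n:ℝ)/2))) = t ^ (q-1) := by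
      rw [show t * (t ^ (a-1) * (t ^ (b-1)) * t ^ (-((n:ℝ)/2)))
          = t ^ (1:ℝ) * t ^ (a-1) * t ^ (b-1) * t ^ (-((n:ℝ)/2)) by rw [Real.rpow_one]; ring,
        ← Real.rpow_add ht', ← Real.rpow_add ht', ← Real.rpow_add ht']
      congr 1
      simp only [ha_def, hb_def, hq_def]
      ring
    simp only [e1, e2, e3, e4]
    rw [show Real.pi * (v / (1 + v) * t) * r ^ 2 = Real.pi * (v/(1+v)) * r ^ 2 * t by ring]
    rw [← e5]
    ring
  rw [setLIntegral_congr_fun measurableSet_Ioi step78]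
  -- Step 9: swap t and v
  have step9 : ∫⁻ t in Ioi (0:ℝ), ∫⁻ v in Ioi (0:ℝ),
        ENNReal.ofReal ((v ^ (b-1) * (1+v) ^ (-((n:ℝ)/2)))
          * (t ^ (q-1) * Real.exp (-(Real.pi * (v/(1+v)) * r ^ 2 * t))))
      = ∫⁻ v in Ioi (0:ℝ), ∫⁻ t in Ioi (0:ℝ),
        ENNReal.ofReal ((v ^ (b-1) * (1+v) ^ (-((n:ℝ)/2)))
          * (t ^ (q-1) * Real.exp (-(Real.pi * (v/(1+v)) * r ^ 2 * t)))) := by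
    refine lintegral_lintegral_swap ?_
    apply Measurable.aemeasurable
    fun_prop
  rw [step9]
  -- Step 10: inner t integral via Gamma
  have step10 : ∀ v ∈ Ioi (0:ℝ), ∫⁻ t in Ioi (0:ℝ),
        ENNReal.ofReal ((v ^ (b-1) * (1+v) ^ (-((n:ℝ)/2)))
          * (t ^ (q-1) * Real.exp (-(Real.pi * (v/(1+v)) * r ^ 2 * t))))
      = ENNReal.ofReal ((Real.Gamma q * Real.pi ^ (-q) * r ^ (α + β - (n:ℝ)))
          * (v ^ (α/2 - 1) * (1+v) ^ (-(α/2 + β/2)))) := by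
    intro v hv
    have hv' : (0:ℝ) < v := hv
    have h1v : (0:ℝ) < 1 + v := by linarith
    have hcv : (0:ℝ) < Real.pi * (v/(1+v)) * r ^ 2 := by positivity
    simp_rw [ENNReal.ofReal_mul (by positivity : (0:ℝ) ≤ v ^ (b-1) * (1+v) ^ (-((n:ℝ)/2)))]
    rw [lintegral_const_mul' _ _ ENNReal.ofReal_ne_top, gammaLintegral hq hcv,
      ← ENNReal.ofReal_mul (by positivity)]
    congr 1
    have e6 : (Real.pi * (v/(1+v)) * r ^ 2) ^ (-q)
        = Real.pi ^ (-q) * (v ^ (-q) * (1+v) ^ q) * (r ^ 2) ^ (-q) := by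
      rw [Real.mul_rpow (by positivity) (by positivity),
        Real.mul_rpow Real.pi_pos.le (by positivity),
        Real.div_rpow hv'.le h1v.le, Real.rpow_neg h1v.le q, div_inv_eq_mul]
    have e7 : ((r:ℝ) ^ 2) ^ (-q) = r ^ (α + β - (n:ℝ)) := by
      rw [← Real.rpow_natCast r 2, ← Real.rpow_mul hr.le]
      congr 1
      simp only [hq_def]
      push_cast
      ring
    have e8 : v ^ (b-1) * v ^ (-q) = v ^ (α/2 - 1) := by
      rw [← Real.rpow_add hv']
      congr 1
      simp only [hb_def, hq_def]
      ring
    have e9 : (1+v) ^ (-((n:ℝ)/2)) * (1+v) ^ q = (1+v) ^ (-(α/2 + β/2)) := by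
      rw [← Real.rpow_add h1v]
      congr 1
      simp only [hq_def]
      ring
    calc v ^ (b-1) * (1+v) ^ (-((n:ℝ)/2)) * (Real.Gamma q * (Real.pi * (v/(1+v)) * r ^ 2) ^ (-q))
        = Real.Gamma q * Real.pi ^ (-q) * (r ^ 2 : ℝ) ^ (-q)
          * ((v ^ (b-1) * v ^ (-q)) * ((1+v) ^ (-((n:ℝ)/2)) * (1+v) ^ q)) := by
          rw [e6]; ring
      _ = _ := by rw [e7, e8, e9]
  rw [setLIntegral_congr_fun measurableSet_Ioi step10]
  -- Step 11: Beta integral and assembling constants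
  simp_rw [ENNReal.ofReal_mul (by positivity : (0:ℝ) ≤ Real.Gamma q * Real.pi ^ (-q) * r ^ (α + β - (n:ℝ)))]
  rw [lintegral_const_mul' _ _ ENNReal.ofReal_ne_top]
  have hbeta : ∫⁻ v in Ioi (0:ℝ), ENNReal.ofReal (v ^ (α/2 - 1) * (1+v) ^ (-(α/2 + β/2)))
      = ENNReal.ofReal (Real.Gamma (α/2) * Real.Gamma (β/2) / Real.Gamma (α/2 + β/2)) :=
    betaLintegral hα2 hβ2
  rw [hbeta, hK]
  rw [← ENNReal.ofReal_mul (by positivity), ← ENNReal.ofReal_mul (by positivity),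
    ← ENNReal.ofReal_mul (by positivity)]
  congr 1
  have hπ : Real.pi ^ a * Real.pi ^ b * Real.pi ^ (-q) = Real.pi ^ ((n:ℝ)/2) := by
    rw [← Real.rpow_add Real.pi_pos, ← Real.rpow_add Real.pi_pos]
    congr 1
    simp only [ha_def, hb_def, hq_def]
    ring
  have hΓa : Real.Gamma a ≠ 0 := (Real.Gamma_pos_of_pos ha).ne'
  have hΓb : Real.Gamma b ≠ 0 := (Real.Gamma_pos_of_pos hb).ne'
  have hΓab : Real.Gamma (α/2 + β/2) ≠ 0 := (Real.Gamma_pos_of_pos (by linarith)).ne'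
  rw [show (α + β)/2 = α/2 + β/2 by ring, ← hπ]
  field_simp


theorem stmt4 (n : ℕ) (α β : ℝ)
    (hα : α ∈ Set.Ioo (0 : ℝ) n) (hβ : β ∈ Set.Ioo (0 : ℝ) n)
    (hαβ : α + β < n)
    (x w : EuclideanSpace ℝ (Fin n)) (hxw : x ≠ w) :
    ∫ y : EuclideanSpace ℝ (Fin n),
        ‖x - y‖ ^ (α - (n : ℝ)) * ‖y - w‖ ^ (β - (n : ℝ))
      = (rieszGamma α n * rieszGamma β n / rieszGamma (α + β) n)
          * ‖x - w‖ ^ (α + β - (n : ℝ)) := by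
  obtain ⟨hα0, hαn⟩ := hα
  obtain ⟨hβ0, hβn⟩ := hβ
  have hz : x - w ≠ 0 := sub_ne_zero.mpr hxw
  have hr : (0:ℝ) < ‖x - w‖ := norm_pos_iff.mpr hz
  have g1 : 0 < Real.Gamma (((n:ℝ) - α - β)/2) := Real.Gamma_pos_of_pos (by linarith)
  have g2 : 0 < Real.Gamma (α/2) := Real.Gamma_pos_of_pos (by linarith)
  have g3 : 0 < Real.Gamma (β/2) := Real.Gamma_pos_of_pos (by linarith)
  have g4 : 0 < Real.Gamma (((n:ℝ) - α)/2) := Real.Gamma_pos_of_pos (by linarith)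
  have g5 : 0 < Real.Gamma (((n:ℝ) - β)/2) := Real.Gamma_pos_of_pos (by linarith)
  have g6 : 0 < Real.Gamma ((α + β)/2) := Real.Gamma_pos_of_pos (by linarith)
  have hπ : (0:ℝ) < Real.pi ^ ((n:ℝ)/2) := Real.rpow_pos_of_pos Real.pi_pos _
  set C : ℝ := Real.pi ^ ((n : ℝ) / 2) * Real.Gamma (((n : ℝ) - α - β) / 2)
      * Real.Gamma (α / 2) * Real.Gamma (β / 2)
    / (Real.Gamma (((n : ℝ) - α) / 2) * Real.Gamma (((n : ℝ) - β) / 2)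
      * Real.Gamma ((α + β) / 2)) with hC_def
  have hC : 0 ≤ C := by
    rw [hC_def]
    exact le_of_lt (div_pos (mul_pos (mul_pos (mul_pos hπ g1) g2) g3)
      (mul_pos (mul_pos g4 g5) g6))
  have hmeas : AEStronglyMeasurable
      (fun y : EuclideanSpace ℝ (Fin n) =>
        ‖x - y‖ ^ (α - (n : ℝ)) * ‖y - w‖ ^ (β - (n : ℝ))) volume := by
    apply Measurable.aestronglyMeasurable
    fun_prop
  rw [integral_eq_lintegral_of_nonneg_ae (ae_of_all _ fun y => by positivity) hmeas]
  have htrans : ∫⁻ y : EuclideanSpace ℝ (Fin n),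
        ENNReal.ofReal (‖x - y‖ ^ (α - (n:ℝ)) * ‖y - w‖ ^ (β - (n:ℝ)))
      = ∫⁻ y : EuclideanSpace ℝ (Fin n),
        ENNReal.ofReal (‖(x - w) - y‖ ^ (α - (n:ℝ)) * ‖y‖ ^ (β - (n:ℝ))) := by
    rw [← lintegral_add_right_eq_self (fun y : EuclideanSpace ℝ (Fin n) =>
      ENNReal.ofReal (‖x - y‖ ^ (α - (n:ℝ)) * ‖y - w‖ ^ (β - (n:ℝ)))) w]
    refine lintegral_congr fun y => ?_
    rw [show x - (y + w) = (x - w) - y by abel, show y + w - w = y by abel]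
  rw [htrans, rieszCore ⟨hα0, hαn⟩ ⟨hβ0, hβn⟩ hαβ (x - w) hz, ← hC_def,
    ENNReal.toReal_ofReal (by positivity)]
  have hconst : C = rieszGamma α n * rieszGamma β n / rieszGamma (α + β) n := by
    simp only [rieszGamma, hC_def]
    rw [show (n:ℝ) - (α + β) = (n:ℝ) - α - β by ring,
      show (2:ℝ) ^ (α + β) = 2 ^ α * 2 ^ β from Real.rpow_add two_pos α β]
    have h2α : (0:ℝ) < 2 ^ α := Real.rpow_pos_of_pos two_pos α
    have h2β : (0:ℝ) < 2 ^ β := Real.rpow_pos_of_pos two_pos β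
    field_simp
  rw [hconst]
end

section
/- Suppose ψ ∈ L⁵(ℝ³) is measurable and there exists C ∈ (0,∞) such that |ψ(x)| ≤ C ∫_{ℝ³} |x−y|^{−1} ⟨y⟩^{−4} |ψ(y)| dy for a.e. x ∈ ℝ³. Then ψ ∈ L^∞(ℝ³). -/
open MeasureTheory Metric
open scoped ENNReal NNReal

noncomputable section

local notation "E3" => EuclideanSpace ℝ (Fin 3)

lemma aux_ball_lt_top :
    ∫⁻ z in Metric.ball (0 : EuclideanSpace ℝ (Fin 3)) 1,
      ENNReal.ofReal (‖z‖ ^ (-(5/4) : ℝ)) < ⊤ := by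
  set E := EuclideanSpace ℝ (Fin 3)
  set f : E → ℝ≥0∞ := fun z => ENNReal.ofReal (‖z‖ ^ (-(5/4) : ℝ)) with hf
  set A : ℕ → Set E := fun n => closedBall 0 ((2:ℝ)⁻¹ ^ n) \ ball 0 ((2:ℝ)⁻¹ ^ (n+1)) with hA
  have hcover : ball (0:E) 1 ⊆ {0} ∪ ⋃ n, A n := by
    intro z hz
    rcases eq_or_ne z 0 with rfl | hz0
    · exact Or.inl rfl
    refine Or.inr ?_
    have hz1 : ‖z‖ < 1 := by simpa [mem_ball, dist_eq_norm] using hz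
    have hz0' : 0 < ‖z‖ := norm_pos_iff.2 hz0
    obtain ⟨n, hn⟩ : ∃ n : ℕ, (2:ℝ)⁻¹ ^ (n+1) ≤ ‖z‖ := by
      obtain ⟨n, hn⟩ := exists_pow_lt_of_lt_one hz0' (by norm_num : (2:ℝ)⁻¹ < 1)
      exact ⟨n, le_of_lt (by
        calc (2:ℝ)⁻¹ ^ (n+1) ≤ (2:ℝ)⁻¹ ^ n := by
              apply pow_le_pow_of_le_one (by norm_num) (by norm_num) (Nat.le_succ n)
        _ < ‖z‖ := hn)⟩
    classical
    have hex : ∃ m : ℕ, (2:ℝ)⁻¹ ^ (m+1) ≤ ‖z‖ := ⟨n, hn⟩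
    set n₀ := Nat.find hex with hn₀
    have hlow : (2:ℝ)⁻¹ ^ (n₀+1) ≤ ‖z‖ := Nat.find_spec hex
    have hhigh : ‖z‖ ≤ (2:ℝ)⁻¹ ^ n₀ := by
      rcases Nat.eq_zero_or_pos n₀ with h0 | h0
      · rw [h0]; simpa using hz1.le
      · have := Nat.find_min hex (Nat.sub_lt h0 one_pos)
        have h' : ¬ (2:ℝ)⁻¹ ^ (n₀ - 1 + 1) ≤ ‖z‖ := this
        rw [Nat.sub_add_cancel h0] at h'
        linarith [not_le.mp h']
    refine Set.mem_iUnion.2 ⟨n₀, ?_⟩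
    constructor
    · simpa [mem_closedBall, dist_eq_norm] using hhigh
    · simpa [mem_ball, dist_eq_norm] using not_lt.2 hlow
  have hterm : ∀ n : ℕ, ∫⁻ z in A n, f z
      ≤ ENNReal.ofReal 4 * ENNReal.ofReal ((2:ℝ)⁻¹) ^ n
        * volume (ball (0:E) 1) := by
    intro n
    have hbnd : ∀ z ∈ A n, f z ≤ ENNReal.ofReal ((4:ℝ) ^ (n+1)) := by
      intro z hz
      have hzlow : (2:ℝ)⁻¹ ^ (n+1) ≤ ‖z‖ := by
        have := hz.2
        simpa [mem_ball, dist_eq_norm, not_lt] using this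
      have hp : (0:ℝ) < (2:ℝ)⁻¹ ^ (n+1) := by positivity
      have h1 : ‖z‖ ^ (-(5/4):ℝ) ≤ ((2:ℝ)⁻¹ ^ (n+1)) ^ (-(5/4):ℝ) :=
        Real.rpow_le_rpow_of_nonpos hp hzlow (by norm_num)
      have h2 : ((2:ℝ)⁻¹ ^ (n+1)) ^ (-(5/4):ℝ) ≤ ((2:ℝ)⁻¹ ^ (n+1)) ^ (-(2:ℝ)) :=
        Real.rpow_le_rpow_of_exponent_ge hp
          (pow_le_one₀ (by norm_num) (by norm_num)) (by norm_num)
      have h3 : ((2:ℝ)⁻¹ ^ (n+1)) ^ (-(2:ℝ)) = (4:ℝ) ^ (n+1) := by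
        rw [Real.rpow_neg hp.le, show ((2:ℝ)⁻¹ ^ (n+1)) ^ (2:ℝ) = ((2:ℝ)⁻¹ ^ (n+1)) ^ (2:ℕ) from
          Real.rpow_natCast _ 2]
        rw [inv_pow, inv_pow, inv_inv, ← pow_mul,
          show (4:ℝ) = 2^2 from by norm_num, ← pow_mul, mul_comm]
      exact ENNReal.ofReal_le_ofReal (by rw [← h3]; exact h1.trans h2)
    have hmeasA : MeasurableSet (A n) :=
      (measurableSet_closedBall).diff measurableSet_ball
    calc ∫⁻ z in A n, f z ≤ ∫⁻ _ in A n, ENNReal.ofReal ((4:ℝ) ^ (n+1)) :=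
          setLIntegral_mono measurable_const (fun z hz => hbnd z hz)
      _ = ENNReal.ofReal ((4:ℝ) ^ (n+1)) * volume (A n) := setLIntegral_const _ _
      _ ≤ ENNReal.ofReal ((4:ℝ) ^ (n+1)) * volume (closedBall (0:E) ((2:ℝ)⁻¹ ^ n)) := by
          gcongr
          exact Set.diff_subset
      _ = ENNReal.ofReal ((4:ℝ) ^ (n+1)) *
            (ENNReal.ofReal (((2:ℝ)⁻¹ ^ n) ^ Module.finrank ℝ E) * volume (ball (0:E) 1)) := by
          rw [Measure.addHaar_closedBall _ _ (by positivity)]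
      _ = ENNReal.ofReal 4 * ENNReal.ofReal ((2:ℝ)⁻¹) ^ n * volume (ball (0:E) 1) := by
          rw [← mul_assoc, ← ENNReal.ofReal_mul (by positivity), ← ENNReal.ofReal_pow (by norm_num),
            ← ENNReal.ofReal_mul (by norm_num)]
          congr 2
          have hE : Module.finrank ℝ E = 3 := finrank_euclideanSpace_fin
          rw [hE]
          have h5 : ((2:ℝ)⁻¹ ^ n) ^ 3 = ((2:ℝ)⁻¹ ^ 3) ^ n := by
            rw [← pow_mul, ← pow_mul, mul_comm]
          rw [h5, pow_succ, mul_comm ((4:ℝ)^n) 4, mul_assoc, ← mul_pow]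
          norm_num
    
  calc ∫⁻ z in ball (0:E) 1, f z ≤ ∫⁻ z in ({0} ∪ ⋃ n, A n : Set E), f z :=
        lintegral_mono_set hcover
    _ ≤ (∫⁻ z in ({0} : Set E), f z) + ∫⁻ z in (⋃ n, A n), f z := lintegral_union_le _ _ _
    _ ≤ (∫⁻ z in ({0} : Set E), f z) + ∑' n, ∫⁻ z in A n, f z := by
        gcongr; exact lintegral_iUnion_le _ _
    _ ≤ 0 + ∑' n, (ENNReal.ofReal 4 * ENNReal.ofReal ((2:ℝ)⁻¹) ^ n * volume (ball (0:E) 1)) := by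
        gcongr with n
        · rw [lintegral_singleton]
          simp [hf, Real.zero_rpow (by norm_num : (-(5/4):ℝ) ≠ 0)]
        · exact hterm n
    _ < ⊤ := by
        rw [zero_add]
        have : ∑' n : ℕ, (ENNReal.ofReal 4 * ENNReal.ofReal ((2:ℝ)⁻¹) ^ n * volume (ball (0:E) 1))
            = ENNReal.ofReal 4 * (∑' n : ℕ, ENNReal.ofReal ((2:ℝ)⁻¹) ^ n) * volume (ball (0:E) 1) := by
          rw [ENNReal.tsum_mul_right, ENNReal.tsum_mul_left]
        rw [this, ENNReal.tsum_geometric]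
        apply ENNReal.mul_lt_top
        apply ENNReal.mul_lt_top
        · exact ENNReal.ofReal_lt_top
        · rw [ENNReal.ofReal_inv_of_pos (by norm_num), ENNReal.ofReal_ofNat, ENNReal.one_sub_inv_two]
          simp
        · exact measure_ball_lt_top

theorem stmt17 (ψ : EuclideanSpace ℝ (Fin 3) → ℝ) (hmeas : Measurable ψ)
    (hψ : MemLp ψ 5 volume) (C : ℝ) (hC : 0 < C)
    (hbound : ∀ᵐ x : EuclideanSpace ℝ (Fin 3),
      |ψ x| ≤ C * ∫ y : EuclideanSpace ℝ (Fin 3),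
        ‖x - y‖ ^ (-(1 : ℝ)) * Real.sqrt (1 + ‖y‖ ^ 2) ^ (-(4 : ℝ)) * |ψ y|) :
    MemLp ψ ⊤ volume := by
  classical
  set H : E3 → ℝ≥0∞ := fun y => (‖ψ y‖₊ : ℝ≥0∞) with hHdef
  set G : E3 → ℝ≥0∞ := fun y => ENNReal.ofReal (Real.sqrt (1 + ‖y‖ ^ 2) ^ (-(4:ℝ))) with hGdef
  have hHmeas : Measurable H := hmeas.nnnorm.coe_nnreal_ennreal
  have hGmeas : Measurable G := by fun_prop
  have hconj : Real.HolderConjugate (5/4) 5 := ⟨by norm_num, by norm_num, by norm_num⟩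
  -- ψ ∈ L⁵ : the 5-th power lintegral is finite
  have hK : ∫⁻ y, H y ^ (5:ℝ) < ⊤ := by
    have h := hψ.2
    rw [eLpNorm_eq_lintegral_rpow_enorm_toReal (by norm_num) (by norm_num)] at h
    simp only [ENNReal.toReal_ofNat] at h
    exact (ENNReal.rpow_lt_top_iff_of_pos (by norm_num)).1 h
  -- the G-term to the power 5/4
  have hG54 : ∀ y : E3, G y ^ ((5:ℝ)/4) = ENNReal.ofReal (((1:ℝ) + ‖y‖ ^ 2) ^ (-5/2 : ℝ)) := by
    intro y
    have h0 : (0:ℝ) ≤ 1 + ‖y‖ ^ 2 := by positivity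
    rw [hGdef, ENNReal.ofReal_rpow_of_nonneg (Real.rpow_nonneg (Real.sqrt_nonneg _) _)
      (by norm_num)]
    congr 1
    rw [← Real.rpow_mul (Real.sqrt_nonneg _), Real.sqrt_eq_rpow, ← Real.rpow_mul h0]
    norm_num
  have hL : ∫⁻ y, G y ^ ((5:ℝ)/4) < ⊤ := by
    have hint := integrable_rpow_neg_one_add_norm_sq (E := E3) (μ := volume) (r := 5)
      (by rw [finrank_euclideanSpace_fin]; norm_num)
    have h2 := (hasFiniteIntegral_iff_ofReal (by
      filter_upwards with y
      positivity : 0 ≤ᵐ[(volume : Measure E3)]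
        fun y : E3 => ((1:ℝ) + ‖y‖ ^ 2) ^ (-5/2 : ℝ))).1 hint.2
    calc ∫⁻ y, G y ^ ((5:ℝ)/4)
        = ∫⁻ y : E3, ENNReal.ofReal (((1:ℝ) + ‖y‖ ^ 2) ^ (-5/2 : ℝ)) := lintegral_congr hG54
      _ < ⊤ := h2
  -- bound G ≤ 1
  have hGle1 : ∀ y : E3, G y ≤ 1 := by
    intro y
    have h1s : (1:ℝ) ≤ Real.sqrt (1 + ‖y‖ ^ 2) := by
      have := Real.sqrt_le_sqrt (show (1:ℝ) ≤ 1 + ‖y‖ ^ 2 by nlinarith [sq_nonneg ‖y‖])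
      simpa using this
    rw [hGdef]
    calc ENNReal.ofReal (Real.sqrt (1 + ‖y‖ ^ 2) ^ (-(4:ℝ)))
        ≤ ENNReal.ofReal 1 :=
          ENNReal.ofReal_le_ofReal
            (Real.rpow_le_one_of_one_le_of_nonpos h1s (by norm_num))
      _ = 1 := ENNReal.ofReal_one
  -- the uniform bound on the lintegral of the kernel
  set Jv : ℝ≥0∞ := ∫⁻ z in Metric.ball (0 : E3) 1, ENNReal.ofReal (‖z‖ ^ (-(5/4) : ℝ)) with hJdef
  have hJ : Jv < ⊤ := aux_ball_lt_top
  set Lv : ℝ≥0∞ := ∫⁻ y, G y ^ ((5:ℝ)/4) with hLdef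
  set Kv : ℝ≥0∞ := ∫⁻ y, H y ^ (5:ℝ) with hKdef
  set Mtot : ℝ≥0∞ := Jv ^ (1/((5:ℝ)/4)) * Kv ^ (1/(5:ℝ))
      + Lv ^ (1/((5:ℝ)/4)) * Kv ^ (1/(5:ℝ)) with hMdef
  have hMtop : Mtot < ⊤ := by
    rw [hMdef]
    apply ENNReal.add_lt_top.2
    constructor <;> apply ENNReal.mul_lt_top <;>
      exact ENNReal.rpow_lt_top_of_nonneg (by norm_num)
        (by first | exact hJ.ne | exact hL.ne | exact hK.ne)
  -- main pointwise bound on the lintegral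
  have hmain : ∀ x : E3, ∫⁻ y, ENNReal.ofReal (‖x - y‖ ^ (-(1:ℝ))) * G y * H y ≤ Mtot := by
    intro x
    set h₁ : E3 → ℝ≥0∞ := fun y => ENNReal.ofReal (‖x - y‖ ^ (-(1:ℝ))) with h1def
    have h₁meas : Measurable h₁ := by fun_prop
    set I : E3 → ℝ≥0∞ := (Metric.ball x 1).indicator h₁ with hIdef
    have hImeas : Measurable I := h₁meas.indicator measurableSet_ball
    -- pointwise splitting
    have hsplit : ∀ y : E3, h₁ y * G y * H y ≤ I y * H y + G y * H y := by
      intro y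
      by_cases hy : y ∈ Metric.ball x 1
      · calc h₁ y * G y * H y ≤ h₁ y * 1 * H y := by gcongr; exact hGle1 y
          _ = I y * H y := by rw [mul_one, hIdef, Set.indicator_of_mem hy]
          _ ≤ I y * H y + G y * H y := le_self_add
      · have hxy : (1:ℝ) ≤ ‖x - y‖ := by
          have h' := hy
          simp only [Metric.mem_ball, not_lt, dist_eq_norm] at h'
          rwa [norm_sub_rev] at h'
        have hh1 : h₁ y ≤ 1 := by
          rw [h1def]
          calc ENNReal.ofReal (‖x - y‖ ^ (-(1:ℝ)))
              ≤ ENNReal.ofReal 1 :=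
                ENNReal.ofReal_le_ofReal
                  (Real.rpow_le_one_of_one_le_of_nonpos hxy (by norm_num))
            _ = 1 := ENNReal.ofReal_one
        calc h₁ y * G y * H y ≤ 1 * G y * H y := by gcongr
          _ = G y * H y := by rw [one_mul]
          _ ≤ I y * H y + G y * H y := le_add_self
    -- value of ∫⁻ I^{5/4}
    have hI54 : ∀ y : E3, I y ^ ((5:ℝ)/4)
        = (Metric.ball x 1).indicator (fun y => ENNReal.ofReal (‖x - y‖ ^ (-(5/4):ℝ))) y := by
      intro y
      by_cases hy : y ∈ Metric.ball x 1
      · rw [hIdef, Set.indicator_of_mem hy, Set.indicator_of_mem hy, h1def,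
          ENNReal.ofReal_rpow_of_nonneg (Real.rpow_nonneg (norm_nonneg _) _) (by norm_num),
          ← Real.rpow_mul (norm_nonneg _)]
        norm_num
      · rw [hIdef, Set.indicator_of_notMem hy, Set.indicator_of_notMem hy,
          ENNReal.zero_rpow_of_pos (by norm_num)]
    have hIint : ∫⁻ y, I y ^ ((5:ℝ)/4) = Jv := by
      have hmp : MeasurePreserving (fun y : E3 => x - y) volume volume :=
        Measure.measurePreserving_sub_left volume x
      have hfm : Measurable fun z : E3 =>
          (Metric.ball (0:E3) 1).indicator (fun z => ENNReal.ofReal (‖z‖ ^ (-(5/4):ℝ))) z :=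
        Measurable.indicator (by fun_prop) measurableSet_ball
      calc ∫⁻ y, I y ^ ((5:ℝ)/4)
          = ∫⁻ y, (Metric.ball (0:E3) 1).indicator
              (fun z => ENNReal.ofReal (‖z‖ ^ (-(5/4):ℝ))) (x - y) := by
            apply lintegral_congr
            intro y
            rw [hI54 y]
            by_cases hy : y ∈ Metric.ball x 1
            · have h2 : x - y ∈ Metric.ball (0:E3) 1 := by
                simp only [Metric.mem_ball, dist_eq_norm, sub_zero]
                rw [norm_sub_rev]
                simpa [dist_eq_norm] using hy
              rw [Set.indicator_of_mem hy, Set.indicator_of_mem h2]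
            · have h2 : x - y ∉ Metric.ball (0:E3) 1 := by
                simp only [Metric.mem_ball, dist_eq_norm, sub_zero, not_lt]
                simp only [Metric.mem_ball, dist_eq_norm, not_lt] at hy
                rwa [norm_sub_rev] at hy
              rw [Set.indicator_of_notMem hy, Set.indicator_of_notMem h2]
        _ = ∫⁻ z, (Metric.ball (0:E3) 1).indicator
              (fun z => ENNReal.ofReal (‖z‖ ^ (-(5/4):ℝ))) z := hmp.lintegral_comp hfm
        _ = Jv := by rw [hJdef, lintegral_indicator measurableSet_ball]
    -- Hölder for both pieces
    have hH1 : ∫⁻ y, I y * H y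
        ≤ (∫⁻ y, I y ^ ((5:ℝ)/4)) ^ (1/((5:ℝ)/4)) * (∫⁻ y, H y ^ (5:ℝ)) ^ (1/(5:ℝ)) := by
      have := ENNReal.lintegral_mul_le_Lp_mul_Lq volume hconj hImeas.aemeasurable
        hHmeas.aemeasurable
      simpa using this
    have hH2 : ∫⁻ y, G y * H y
        ≤ (∫⁻ y, G y ^ ((5:ℝ)/4)) ^ (1/((5:ℝ)/4)) * (∫⁻ y, H y ^ (5:ℝ)) ^ (1/(5:ℝ)) := by
      have := ENNReal.lintegral_mul_le_Lp_mul_Lq volume hconj hGmeas.aemeasurable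
        hHmeas.aemeasurable
      simpa using this
    calc ∫⁻ y, h₁ y * G y * H y ≤ ∫⁻ y, (I y * H y + G y * H y) :=
          lintegral_mono hsplit
      _ = (∫⁻ y, I y * H y) + ∫⁻ y, G y * H y :=
          lintegral_add_left (hImeas.mul hHmeas) _
      _ ≤ (∫⁻ y, I y ^ ((5:ℝ)/4)) ^ (1/((5:ℝ)/4)) * (∫⁻ y, H y ^ (5:ℝ)) ^ (1/(5:ℝ))
          + (∫⁻ y, G y ^ ((5:ℝ)/4)) ^ (1/((5:ℝ)/4)) * (∫⁻ y, H y ^ (5:ℝ)) ^ (1/(5:ℝ)) :=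
          add_le_add hH1 hH2
      _ = Mtot := by rw [hMdef, hIint, hLdef, hKdef]
  -- transfer to the real integral
  have hreal : ∀ x : E3,
      (∫ y : E3, ‖x - y‖ ^ (-(1:ℝ)) * Real.sqrt (1 + ‖y‖ ^ 2) ^ (-(4:ℝ)) * |ψ y|)
        ≤ Mtot.toReal := by
    intro x
    have hnn : 0 ≤ᵐ[(volume : Measure E3)] fun y : E3 =>
        ‖x - y‖ ^ (-(1:ℝ)) * Real.sqrt (1 + ‖y‖ ^ 2) ^ (-(4:ℝ)) * |ψ y| := by
      filter_upwards with y
      positivity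
    have hm : AEStronglyMeasurable (fun y : E3 =>
        ‖x - y‖ ^ (-(1:ℝ)) * Real.sqrt (1 + ‖y‖ ^ 2) ^ (-(4:ℝ)) * |ψ y|) volume := by
      apply Measurable.aestronglyMeasurable
      fun_prop
    rw [integral_eq_lintegral_of_nonneg_ae hnn hm]
    have heq : ∀ y : E3, ENNReal.ofReal
        (‖x - y‖ ^ (-(1:ℝ)) * Real.sqrt (1 + ‖y‖ ^ 2) ^ (-(4:ℝ)) * |ψ y|)
        = ENNReal.ofReal (‖x - y‖ ^ (-(1:ℝ))) * G y * H y := by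
      intro y
      rw [ENNReal.ofReal_mul (by positivity), ENNReal.ofReal_mul (by positivity)]
      rw [hGdef, hHdef, ← Real.norm_eq_abs, ofReal_norm]
      rfl
    calc (∫⁻ y, ENNReal.ofReal
          (‖x - y‖ ^ (-(1:ℝ)) * Real.sqrt (1 + ‖y‖ ^ 2) ^ (-(4:ℝ)) * |ψ y|)).toReal
        = (∫⁻ y, ENNReal.ofReal (‖x - y‖ ^ (-(1:ℝ))) * G y * H y).toReal := by
          congr 1; exact lintegral_congr heq
      _ ≤ Mtot.toReal := ENNReal.toReal_mono hMtop.ne (hmain x)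
  -- conclude
  apply memLp_top_of_bound hmeas.aestronglyMeasurable (C * Mtot.toReal)
  filter_upwards [hbound] with x hx
  rw [Real.norm_eq_abs]
  exact hx.trans (mul_le_mul_of_nonneg_left (hreal x) hC.le)
end
end

section
/- Suppose Ψ ∈ L³(ℝ², ℂ²)-valued measurable (i.e., each component in L³(ℝ²)) and there exists C ∈ (0,∞) such that ‖Ψ(x)‖ ≤ C ∫_{ℝ²} |x−y|^{−1} ⟨y⟩^{−2} ‖Ψ(y)‖ dy for a.e. x ∈ ℝ². Then Ψ ∈ L^∞(ℝ², ℂ²). -/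
open MeasureTheory Set Metric ENNReal

local notation "E" => EuclideanSpace ℝ (Fin 2)

lemma aux_ball : ∫⁻ z : E, (Metric.ball (0:E) 1).indicator
    (fun z => ENNReal.ofReal (‖z‖ ^ (-(3/2) : ℝ))) z < ⊤ := by
  rw [lintegral_indicator measurableSet_ball]
  have hmble : AEMeasurable (fun z : E => ‖z‖ ^ (-(3/2) : ℝ))
      (volume.restrict (ball (0:E) 1)) := by fun_prop
  rw [lintegral_eq_lintegral_meas_le _ (Filter.Eventually.of_forall fun z => by positivity) hmble]
  have hsplit : ∫⁻ t in Ioi (0:ℝ), (volume.restrict (ball (0:E) 1)) {a | t ≤ ‖a‖ ^ (-(3/2):ℝ)}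
      ≤ (∫⁻ t in Ioc (0:ℝ) 1, (volume.restrict (ball (0:E) 1)) {a | t ≤ ‖a‖ ^ (-(3/2):ℝ)})
        + ∫⁻ t in Ioi (1:ℝ), (volume.restrict (ball (0:E) 1)) {a | t ≤ ‖a‖ ^ (-(3/2):ℝ)} :=
    le_trans (lintegral_mono_set Ioi_subset_Ioc_union_Ioi) (lintegral_union_le _ _ _)
  refine lt_of_le_of_lt hsplit (ENNReal.add_lt_top.2 ⟨?_, ?_⟩)
  · calc ∫⁻ t in Ioc (0:ℝ) 1, (volume.restrict (ball (0:E) 1)) {a | t ≤ ‖a‖ ^ (-(3/2):ℝ)}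
        ≤ ∫⁻ _t in Ioc (0:ℝ) 1, volume (ball (0:E) 1) := by
          refine lintegral_mono fun t => ?_
          calc (volume.restrict (ball (0:E) 1)) {a | t ≤ ‖a‖ ^ (-(3/2):ℝ)}
              ≤ (volume.restrict (ball (0:E) 1)) univ := measure_mono (subset_univ _)
            _ = volume (ball (0:E) 1) := by
                rw [Measure.restrict_apply_univ]
      _ = volume (ball (0:E) 1) * volume (Ioc (0:ℝ) 1) := by
          rw [setLIntegral_const]
      _ < ⊤ := by
          refine ENNReal.mul_lt_top measure_ball_lt_top ?_
          simp [Real.volume_Ioc]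
  · calc ∫⁻ t in Ioi (1:ℝ), (volume.restrict (ball (0:E) 1)) {a | t ≤ ‖a‖ ^ (-(3/2):ℝ)}
        ≤ ∫⁻ t in Ioi (1:ℝ), ENNReal.ofReal (t ^ (-(4/3):ℝ)) * volume (ball (0:E) 1) := by
          refine setLIntegral_mono (by fun_prop) fun t ht => ?_
          have ht1 : (1:ℝ) < t := ht
          have ht0 : (0:ℝ) < t := lt_trans one_pos ht1
          have hsub : {a : E | t ≤ ‖a‖ ^ (-(3/2):ℝ)} ⊆ closedBall (0:E) (t ^ (-(2/3):ℝ)) := by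
            intro a ha
            simp only [mem_setOf_eq] at ha
            rcases eq_or_ne a 0 with rfl | h0
            · simp only [norm_zero] at ha
              rw [Real.zero_rpow (by norm_num)] at ha
              linarith
            · have hn : (0:ℝ) < ‖a‖ := norm_pos_iff.2 h0
              have := Real.rpow_le_rpow_of_nonpos ht0 ha (by norm_num : (-(2/3):ℝ) ≤ 0)
              rw [← Real.rpow_mul (norm_nonneg a)] at this
              norm_num at this
              simpa [mem_closedBall_zero_iff] using this
          calc (volume.restrict (ball (0:E) 1)) {a : E | t ≤ ‖a‖ ^ (-(3/2):ℝ)}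
              ≤ volume {a : E | t ≤ ‖a‖ ^ (-(3/2):ℝ)} := Measure.restrict_le_self _
            _ ≤ volume (closedBall (0:E) (t ^ (-(2/3):ℝ))) := measure_mono hsub
            _ = ENNReal.ofReal ((t ^ (-(2/3):ℝ)) ^ (Module.finrank ℝ E)) * volume (ball (0:E) 1) :=
                Measure.addHaar_closedBall _ _ (Real.rpow_nonneg ht0.le _)
            _ = ENNReal.ofReal (t ^ (-(4/3):ℝ)) * volume (ball (0:E) 1) := by
                congr 2
                rw [finrank_euclideanSpace_fin, ← Real.rpow_natCast (t ^ (-(2/3):ℝ)) 2,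
                  ← Real.rpow_mul ht0.le]
                norm_num
      _ = (∫⁻ t in Ioi (1:ℝ), ENNReal.ofReal (t ^ (-(4/3):ℝ))) * volume (ball (0:E) 1) := by
          rw [lintegral_mul_const' _ _ measure_ball_lt_top.ne]
      _ < ⊤ := by
          refine ENNReal.mul_lt_top ?_ measure_ball_lt_top
          have hint : IntegrableOn (fun t : ℝ => t ^ (-(4/3):ℝ)) (Ioi 1) := by
            refine integrableOn_Ioi_rpow_of_lt (by norm_num) one_pos
          have := hint.2
          rw [HasFiniteIntegral] at this
          refine lt_of_le_of_lt (lintegral_mono fun t => ?_) this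
          rw [← ofReal_norm]
          exact ENNReal.ofReal_le_ofReal (le_abs_self _)

lemma aux_brk : ∫⁻ y : E, ENNReal.ofReal ((1 + ‖y‖ ^ 2) ^ (-(3/2) : ℝ)) < ⊤ := by
  have hint : Integrable (fun y : E => ((1:ℝ) + ‖y‖ ^ 2) ^ (-(3:ℝ) / 2)) volume := by
    refine integrable_rpow_neg_one_add_norm_sq ?_
    rw [finrank_euclideanSpace_fin]; norm_num
  have := hint.2
  rw [HasFiniteIntegral] at this
  refine lt_of_le_of_lt (lintegral_mono fun y => ?_) this
  rw [← ofReal_norm]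
  refine ENNReal.ofReal_le_ofReal ?_
  rw [show (-(3/2):ℝ) = (-3)/2 by norm_num]
  exact le_abs_self _

theorem stmt18 (Ψ : EuclideanSpace ℝ (Fin 2) → EuclideanSpace ℂ (Fin 2))
    (hmeas : StronglyMeasurable Ψ) (hΨ : MemLp Ψ 3 volume) (C : ℝ) (hC : 0 < C)
    (hbound : ∀ᵐ x : EuclideanSpace ℝ (Fin 2),
      ‖Ψ x‖ ≤ C * ∫ y : EuclideanSpace ℝ (Fin 2),
        ‖x - y‖ ^ (-(1 : ℝ)) * Real.sqrt (1 + ‖y‖ ^ 2) ^ (-(2 : ℝ)) * ‖Ψ y‖) :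
    MemLp Ψ ⊤ volume := by
  have hΨm : Measurable fun y : E => ‖Ψ y‖ := hmeas.norm.measurable
  set K : ℝ≥0∞ := (∫⁻ z : E, (Metric.ball (0:E) 1).indicator
      (fun z => ENNReal.ofReal (‖z‖ ^ (-(3/2) : ℝ))) z)
    + ∫⁻ y : E, ENNReal.ofReal ((1 + ‖y‖ ^ 2) ^ (-(3/2) : ℝ)) with hKdef
  have hK : K < ⊤ := ENNReal.add_lt_top.2 ⟨aux_ball, aux_brk⟩
  set B : ℝ≥0∞ := ∫⁻ y : E, (ENNReal.ofReal ‖Ψ y‖) ^ (3:ℝ) with hBdef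
  have hB : B < ⊤ := by
    have h3 := hΨ.2
    rw [eLpNorm_eq_lintegral_rpow_enorm_toReal (by norm_num) (by norm_num)] at h3
    simp only [ENNReal.toReal_ofNat] at h3
    by_contra h
    push_neg at h
    have hBtop : B = ⊤ := top_le_iff.mp h
    rw [hBdef] at hBtop
    simp_rw [ofReal_norm] at hBtop
    rw [hBtop] at h3
    rw [ENNReal.top_rpow_of_pos (by norm_num)] at h3
    exact (lt_irrefl _ h3).elim
  set T : ℝ≥0∞ := K ^ (1/(3/2:ℝ)) * B ^ (1/(3:ℝ)) with hTdef
  have hT : T ≠ ⊤ :=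
    ENNReal.mul_ne_top (ENNReal.rpow_ne_top_of_nonneg (by norm_num) hK.ne)
      (ENNReal.rpow_ne_top_of_nonneg (by norm_num) hB.ne)
  have hkey : ∀ x : E, (∫ y : E,
      ‖x - y‖ ^ (-(1 : ℝ)) * Real.sqrt (1 + ‖y‖ ^ 2) ^ (-(2 : ℝ)) * ‖Ψ y‖) ≤ T.toReal := by
    intro x
    set F : E → ℝ≥0∞ := fun y =>
      ENNReal.ofReal (‖x - y‖ ^ (-(1:ℝ)) * Real.sqrt (1 + ‖y‖ ^ 2) ^ (-(2:ℝ))) with hFdef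
    set G : E → ℝ≥0∞ := fun y => ENNReal.ofReal ‖Ψ y‖ with hGdef
    have hF : Measurable F := by fun_prop
    have hG : Measurable G := by fun_prop
    have hsq : ∀ y : E, Real.sqrt (1 + ‖y‖ ^ 2) ^ (-(2:ℝ)) = (1 + ‖y‖ ^ 2) ^ (-(1:ℝ)) := by
      intro y
      have h0 : (0:ℝ) ≤ 1 + ‖y‖ ^ 2 := by positivity
      rw [Real.sqrt_eq_rpow, ← Real.rpow_mul h0]
      norm_num
    -- pointwise bound on F ^ (3/2)
    have hFp : ∀ y : E, F y ^ (3/2:ℝ) ≤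
        (Metric.ball x 1).indicator (fun y => ENNReal.ofReal (‖x - y‖ ^ (-(3/2):ℝ))) y
          + ENNReal.ofReal ((1 + ‖y‖ ^ 2) ^ (-(3/2):ℝ)) := by
      intro y
      have h0 : (0:ℝ) ≤ 1 + ‖y‖ ^ 2 := by positivity
      have h1 : (1:ℝ) ≤ 1 + ‖y‖ ^ 2 := le_add_of_nonneg_right (by positivity)
      have hFy : F y ^ (3/2:ℝ) =
          ENNReal.ofReal (‖x - y‖ ^ (-(3/2):ℝ) * (1 + ‖y‖ ^ 2) ^ (-(3/2):ℝ)) := by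
        rw [hFdef]
        simp only []
        rw [hsq y, ENNReal.ofReal_rpow_of_nonneg (by positivity) (by norm_num),
          Real.mul_rpow (by positivity) (by positivity),
          ← Real.rpow_mul (norm_nonneg _), ← Real.rpow_mul h0]
        norm_num
      rw [hFy]
      by_cases hmem : y ∈ Metric.ball x 1
      · rw [Set.indicator_of_mem hmem]
        refine le_trans ?_ le_self_add
        refine ENNReal.ofReal_le_ofReal ?_
        have : (1 + ‖y‖ ^ 2) ^ (-(3/2):ℝ) ≤ 1 :=
          Real.rpow_le_one_of_one_le_of_nonpos h1 (by norm_num)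
        calc ‖x - y‖ ^ (-(3/2):ℝ) * (1 + ‖y‖ ^ 2) ^ (-(3/2):ℝ)
            ≤ ‖x - y‖ ^ (-(3/2):ℝ) * 1 :=
              mul_le_mul_of_nonneg_left this (by positivity)
          _ = ‖x - y‖ ^ (-(3/2):ℝ) := mul_one _
      · rw [Set.indicator_of_notMem hmem, zero_add]
        refine ENNReal.ofReal_le_ofReal ?_
        have hge : (1:ℝ) ≤ ‖x - y‖ := by
          rw [Metric.mem_ball, dist_eq_norm] at hmem
          push_neg at hmem
          rwa [norm_sub_rev x y]
        have : ‖x - y‖ ^ (-(3/2):ℝ) ≤ 1 :=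
          Real.rpow_le_one_of_one_le_of_nonpos hge (by norm_num)
        calc ‖x - y‖ ^ (-(3/2):ℝ) * (1 + ‖y‖ ^ 2) ^ (-(3/2):ℝ)
            ≤ 1 * (1 + ‖y‖ ^ 2) ^ (-(3/2):ℝ) :=
              mul_le_mul_of_nonneg_right this (by positivity)
          _ = (1 + ‖y‖ ^ 2) ^ (-(3/2):ℝ) := one_mul _
    -- integral of F ^ (3/2) is at most K
    have hA : ∫⁻ y : E, F y ^ (3/2:ℝ) ≤ K := by
      calc ∫⁻ y : E, F y ^ (3/2:ℝ)
          ≤ ∫⁻ y : E, ((Metric.ball x 1).indicator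
              (fun y => ENNReal.ofReal (‖x - y‖ ^ (-(3/2):ℝ))) y
            + ENNReal.ofReal ((1 + ‖y‖ ^ 2) ^ (-(3/2):ℝ))) := lintegral_mono hFp
        _ = (∫⁻ y : E, (Metric.ball x 1).indicator
              (fun y => ENNReal.ofReal (‖x - y‖ ^ (-(3/2):ℝ))) y)
            + ∫⁻ y : E, ENNReal.ofReal ((1 + ‖y‖ ^ 2) ^ (-(3/2):ℝ)) := by
            refine lintegral_add_left ?_ _
            exact Measurable.indicator (by fun_prop) measurableSet_ball
        _ = K := by
            rw [hKdef]
            congr 1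
            have heq : ∀ y : E, (Metric.ball x 1).indicator
                (fun y => ENNReal.ofReal (‖x - y‖ ^ (-(3/2):ℝ))) y
                = (Metric.ball (0:E) 1).indicator
                  (fun z => ENNReal.ofReal (‖z‖ ^ (-(3/2):ℝ))) (y - x) := by
              intro y
              by_cases h : y ∈ Metric.ball x 1
              · rw [Set.indicator_of_mem h, Set.indicator_of_mem
                  (by rwa [mem_ball_zero_iff, ← mem_ball_iff_norm]), norm_sub_rev]
              · rw [Set.indicator_of_notMem h, Set.indicator_of_notMem
                  (by rwa [mem_ball_zero_iff, ← mem_ball_iff_norm])]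
            simp_rw [heq]
            exact lintegral_sub_right_eq_self (fun z => (Metric.ball (0:E) 1).indicator
              (fun z => ENNReal.ofReal (‖z‖ ^ (-(3/2):ℝ))) z) x
    -- now Hölder
    have hnn : (fun _ : E => (0:ℝ)) ≤ᵐ[volume] fun y : E =>
        ‖x - y‖ ^ (-(1:ℝ)) * Real.sqrt (1 + ‖y‖ ^ 2) ^ (-(2:ℝ)) * ‖Ψ y‖ :=
      Filter.Eventually.of_forall fun y => by positivity
    have hsm : AEStronglyMeasurable (fun y : E =>
        ‖x - y‖ ^ (-(1:ℝ)) * Real.sqrt (1 + ‖y‖ ^ 2) ^ (-(2:ℝ)) * ‖Ψ y‖) volume := by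
      apply Measurable.aestronglyMeasurable
      fun_prop
    rw [integral_eq_lintegral_of_nonneg_ae hnn hsm]
    have hofr : ∀ y : E, ENNReal.ofReal
        (‖x - y‖ ^ (-(1:ℝ)) * Real.sqrt (1 + ‖y‖ ^ 2) ^ (-(2:ℝ)) * ‖Ψ y‖) = (F * G) y := by
      intro y
      rw [Pi.mul_apply, hFdef, hGdef]
      exact ENNReal.ofReal_mul (by positivity)
    have hle : (∫⁻ y : E, ENNReal.ofReal
        (‖x - y‖ ^ (-(1:ℝ)) * Real.sqrt (1 + ‖y‖ ^ 2) ^ (-(2:ℝ)) * ‖Ψ y‖)) ≤ T := by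
      simp_rw [hofr]
      have hpq : Real.HolderConjugate (3/2) 3 := Real.holderConjugate_iff.mpr ⟨by norm_num, by norm_num⟩
      refine le_trans (ENNReal.lintegral_mul_le_Lp_mul_Lq volume hpq hF.aemeasurable
        hG.aemeasurable) ?_
      rw [hTdef]
      exact mul_le_mul' (ENNReal.rpow_le_rpow hA (by norm_num)) le_rfl
    exact ENNReal.toReal_mono hT hle
  refine memLp_top_of_bound hΨ.aestronglyMeasurable (C * T.toReal) ?_
  filter_upwards [hbound] with x hx
  exact hx.trans (mul_le_mul_of_nonneg_left (hkey x) hC.le)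
end

section
/- Let n ≥ 3 and let φ ∈ L²(ℝⁿ). Then the function ψ(x) = ∫_{ℝⁿ} |x−y|^{1−n} ⟨y⟩^{−1} φ(y) dy defines an element of L²(ℝⁿ), and there is a constant C (independent of φ) with ‖ψ‖_{L²} ≤ C ‖φ‖_{L²}. -/
open MeasureTheory Metric Set
open scoped ENNReal NNReal

noncomputable section
namespace S19

/-! ### The Japanese bracket -/

def jb {F : Type*} [NormedAddCommGroup F] (y : F) : ℝ := Real.sqrt (1 + ‖y‖ ^ 2)

section jb
variable {F : Type*} [NormedAddCommGroup F]

lemma one_le_jb (y : F) : 1 ≤ jb y := by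
  have h := Real.sqrt_le_sqrt (show (1:ℝ) ≤ 1 + ‖y‖^2 by nlinarith [sq_nonneg ‖y‖])
  simpa [jb] using h

lemma jb_pos (y : F) : 0 < jb y := lt_of_lt_of_le one_pos (one_le_jb y)

lemma norm_le_jb (y : F) : ‖y‖ ≤ jb y := by
  rw [jb]
  nlinarith [Real.sq_sqrt (by positivity : (0:ℝ) ≤ 1 + ‖y‖^2),
    Real.sqrt_nonneg (1 + ‖y‖^2), norm_nonneg y]

lemma jb_lipschitz (x y : F) : jb x ≤ jb y + ‖x - y‖ := by
  have h1 : ‖x‖ ≤ ‖y‖ + ‖x - y‖ := norm_le_norm_add_norm_sub' x y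
  have h2 : 0 ≤ ‖x - y‖ := norm_nonneg _
  have h3 : ‖y‖ ≤ jb y := norm_le_jb y
  have h4 : 0 < jb y := jb_pos y
  have h5 : 0 ≤ jb x := (jb_pos x).le
  have : (jb x)^2 ≤ (jb y + ‖x - y‖)^2 := by
    rw [jb, Real.sq_sqrt (by positivity)]
    have : (jb y)^2 = 1 + ‖y‖^2 := by rw [jb, Real.sq_sqrt (by positivity)]
    nlinarith [norm_nonneg y, norm_nonneg x]
  nlinarith

lemma measurable_jb [MeasurableSpace F] [BorelSpace F] : Measurable (jb : F → ℝ) :=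
  (Real.continuous_sqrt.comp (continuous_const.add (continuous_norm.pow 2))).measurable

end jb

/-! ### Dyadic decomposition helpers -/

variable {n : ℕ}
abbrev Eu (n : ℕ) := EuclideanSpace ℝ (Fin n)

lemma exists_dyadic_up {R d : ℝ} (hR : 0 < R) (hd : R ≤ d) :
    ∃ k : ℕ, 2^k * R ≤ d ∧ d ≤ 2^(k+1) * R := by
  obtain ⟨m, hm⟩ := pow_unbounded_of_one_lt (d / R) (one_lt_two (α := ℝ))
  have hm' : d < 2 ^ m * R := by rwa [div_lt_iff₀ hR] at hm
  have hP : ∃ m : ℕ, d < 2 ^ m * R := ⟨m, hm'⟩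
  classical
  have hm₀ : d < 2 ^ (Nat.find hP) * R := Nat.find_spec hP
  have hm₀ne : Nat.find hP ≠ 0 := by
    intro h
    rw [h] at hm₀; simp at hm₀; linarith
  obtain ⟨k, hk⟩ := Nat.exists_eq_succ_of_ne_zero hm₀ne
  refine ⟨k, ?_, ?_⟩
  · have := Nat.find_min hP (m := k) (by omega)
    push_neg at this
    linarith
  · rw [hk] at hm₀; exact hm₀.le

lemma exists_dyadic_down {R d : ℝ} (hd0 : 0 < d) (hd : d ≤ R) :
    ∃ k : ℕ, R / 2^(k+1) ≤ d ∧ d ≤ R / 2^k := by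
  obtain ⟨m, hm⟩ := pow_unbounded_of_one_lt (R / d) (one_lt_two (α := ℝ))
  have hm' : R / 2 ^ m < d := by
    rw [div_lt_iff₀ (by positivity)]
    rw [div_lt_iff₀ hd0] at hm
    linarith [hm]
  have hP : ∃ m : ℕ, R / 2 ^ m < d := ⟨m, hm'⟩
  classical
  have hm₀ : R / 2 ^ (Nat.find hP) < d := Nat.find_spec hP
  have hm₀ne : Nat.find hP ≠ 0 := by
    intro h
    rw [h] at hm₀; simp at hm₀; linarith
  obtain ⟨k, hk⟩ := Nat.exists_eq_succ_of_ne_zero hm₀ne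
  refine ⟨k, ?_, ?_⟩
  · rw [hk] at hm₀; exact hm₀.le
  · have := Nat.find_min hP (m := k) (by omega)
    push_neg at this
    linarith

lemma pow_algebra_up (a : ℝ) {R : ℝ} (hR : 0 < R) (k : ℕ) :
    ((2:ℝ)^k * R) ^ a * ((2:ℝ)^(k+1) * R) ^ (n:ℝ) =
      2 ^ (n:ℝ) * (2 ^ ((n:ℝ) + a)) ^ k * R ^ ((n:ℝ) + a) := by
  have h2 : (0:ℝ) < 2 := two_pos
  rw [Real.mul_rpow (by positivity) hR.le, Real.mul_rpow (by positivity) hR.le,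
    ← Real.rpow_natCast (2:ℝ) k, ← Real.rpow_natCast (2:ℝ) (k+1),
    ← Real.rpow_mul h2.le, ← Real.rpow_mul h2.le,
    ← Real.rpow_natCast ((2:ℝ) ^ ((n:ℝ) + a)) k, ← Real.rpow_mul h2.le]
  simp only [Real.rpow_def_of_pos h2, Real.rpow_def_of_pos hR, ← Real.exp_add]
  rw [Real.exp_eq_exp]
  push_cast
  ring

lemma pow_algebra_down (a : ℝ) {R : ℝ} (hR : 0 < R) (k : ℕ) :
    (R / 2^(k+1)) ^ a * (R / 2^k) ^ (n:ℝ) =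
      2 ^ (-a) * (2 ^ (-((n:ℝ) + a))) ^ k * R ^ ((n:ℝ) + a) := by
  have h2 : (0:ℝ) < 2 := two_pos
  rw [div_eq_mul_inv, div_eq_mul_inv, ← Real.rpow_natCast (2:ℝ) (k+1),
    ← Real.rpow_natCast (2:ℝ) k, ← Real.rpow_neg h2.le, ← Real.rpow_neg h2.le,
    Real.mul_rpow hR.le (by positivity), Real.mul_rpow hR.le (by positivity),
    ← Real.rpow_mul h2.le, ← Real.rpow_mul h2.le,
    ← Real.rpow_natCast ((2:ℝ) ^ (-((n:ℝ) + a))) k, ← Real.rpow_mul h2.le]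
  simp only [Real.rpow_def_of_pos h2, Real.rpow_def_of_pos hR, ← Real.exp_add]
  rw [Real.exp_eq_exp]
  push_cast
  ring

/-! ### Dyadic integral estimates -/

lemma dyadic_tail (ρ : Eu n → ℝ) (hρ : Measurable ρ) (V : ℝ≥0∞)
    (hV : ∀ t : ℝ, 0 < t → volume {y : Eu n | ρ y ≤ t} ≤ ENNReal.ofReal (t ^ (n:ℝ)) * V)
    {a : ℝ} (ha : (n:ℝ) + a < 0) {R : ℝ} (hR : 0 < R)
    (f : Eu n → ℝ≥0∞) (c₀ : ℝ)
    (s : Set (Eu n)) (hsm : MeasurableSet s) (hs : s ⊆ {y | R ≤ ρ y})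
    (hf : ∀ y ∈ s, f y ≤ ENNReal.ofReal c₀ * ENNReal.ofReal (ρ y ^ a)) :
    ∫⁻ y in s, f y ≤ ENNReal.ofReal c₀ * (ENNReal.ofReal (2 ^ (n:ℝ)) * V *
      (1 - ENNReal.ofReal (2 ^ ((n:ℝ) + a)))⁻¹) * ENNReal.ofReal (R ^ ((n:ℝ) + a)) := by
  have ha0 : a < 0 := by
    have : (0:ℝ) ≤ (n:ℝ) := Nat.cast_nonneg n
    linarith
  set S : ℕ → Set (Eu n) := fun k => s ∩ {y | 2^k * R ≤ ρ y ∧ ρ y ≤ 2^(k+1) * R} with hS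
  have hcov : s ⊆ ⋃ k, S k := by
    intro y hy
    obtain ⟨k, h1, h2⟩ := exists_dyadic_up hR (hs hy)
    exact mem_iUnion.2 ⟨k, hy, h1, h2⟩
  have hSm : ∀ k, MeasurableSet (S k) := by
    intro k
    exact hsm.inter ((measurableSet_le measurable_const hρ).inter
      (measurableSet_le hρ measurable_const))
  have hbound : ∀ k, ∫⁻ y in S k, f y ≤
      (ENNReal.ofReal c₀ * ENNReal.ofReal (((2:ℝ)^k * R) ^ a)) *
        (ENNReal.ofReal (((2:ℝ)^(k+1) * R) ^ (n:ℝ)) * V) := by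
    intro k
    have hpos : (0:ℝ) < 2^k * R := by positivity
    have h1 : ∫⁻ y in S k, f y ≤
        ∫⁻ _ in S k, (ENNReal.ofReal c₀ * ENNReal.ofReal (((2:ℝ)^k * R) ^ a)) := by
      apply setLIntegral_mono' (hSm k)
      intro y hy
      refine (hf y hy.1).trans ?_
      exact mul_le_mul_right (ENNReal.ofReal_le_ofReal
        (Real.rpow_le_rpow_of_nonpos hpos hy.2.1 ha0.le)) _
    rw [setLIntegral_const] at h1
    refine h1.trans ?_
    gcongr
    refine (measure_mono (fun y hy => hy.2.2 : S k ⊆ {y | ρ y ≤ 2^(k+1) * R})).trans ?_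
    exact hV _ (by positivity)
  calc ∫⁻ y in s, f y ≤ ∫⁻ y in ⋃ k, S k, f y := lintegral_mono_set hcov
    _ ≤ ∑' k, ∫⁻ y in S k, f y := lintegral_iUnion_le _ _
    _ ≤ ∑' k, (ENNReal.ofReal c₀ * ENNReal.ofReal (((2:ℝ)^k * R) ^ a)) *
        (ENNReal.ofReal (((2:ℝ)^(k+1) * R) ^ (n:ℝ)) * V) := ENNReal.tsum_le_tsum hbound
    _ = ∑' k, (ENNReal.ofReal c₀ * (ENNReal.ofReal (2 ^ (n:ℝ)) * V) *
          ENNReal.ofReal (R ^ ((n:ℝ) + a))) * ENNReal.ofReal (2 ^ ((n:ℝ) + a)) ^ k := by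
      refine tsum_congr fun k => ?_
      rw [← ENNReal.ofReal_pow (by positivity),
        show ENNReal.ofReal c₀ * ENNReal.ofReal (((2:ℝ)^k * R) ^ a) *
          (ENNReal.ofReal (((2:ℝ)^(k+1) * R) ^ (n:ℝ)) * V) =
          ENNReal.ofReal c₀ * V * (ENNReal.ofReal (((2:ℝ)^k * R) ^ a) *
            ENNReal.ofReal (((2:ℝ)^(k+1) * R) ^ (n:ℝ))) by ring,
        ← ENNReal.ofReal_mul (by positivity), pow_algebra_up a hR k,
        ENNReal.ofReal_mul (by positivity), ENNReal.ofReal_mul (by positivity)]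
      ring
    _ = (ENNReal.ofReal c₀ * (ENNReal.ofReal (2 ^ (n:ℝ)) * V) *
          ENNReal.ofReal (R ^ ((n:ℝ) + a))) *
          (1 - ENNReal.ofReal (2 ^ ((n:ℝ) + a)))⁻¹ := by
      rw [ENNReal.tsum_mul_left, ENNReal.tsum_geometric]
    _ = ENNReal.ofReal c₀ * (ENNReal.ofReal (2 ^ (n:ℝ)) * V *
        (1 - ENNReal.ofReal (2 ^ ((n:ℝ) + a)))⁻¹) * ENNReal.ofReal (R ^ ((n:ℝ) + a)) := by
      ring

lemma dyadic_ball (ρ : Eu n → ℝ) (hρ : Measurable ρ) (V : ℝ≥0∞)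
    (hV : ∀ t : ℝ, 0 < t → volume {y : Eu n | ρ y ≤ t} ≤ ENNReal.ofReal (t ^ (n:ℝ)) * V)
    {a : ℝ} (ha2 : a < 0) {R : ℝ} (hR : 0 < R)
    (f : Eu n → ℝ≥0∞) (c₀ : ℝ)
    (s : Set (Eu n)) (hsm : MeasurableSet s) (hs : s ⊆ {y | ρ y ≤ R})
    (hρ0 : ∀ y, 0 ≤ ρ y)
    (hf : ∀ᵐ y ∂(volume : Measure (Eu n)), y ∈ s →
      f y ≤ ENNReal.ofReal c₀ * ENNReal.ofReal (ρ y ^ a)) :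
    ∫⁻ y in s, f y ≤ ENNReal.ofReal c₀ * (ENNReal.ofReal (2 ^ (-a)) * V *
      (1 - ENNReal.ofReal (2 ^ (-((n:ℝ) + a))))⁻¹) * ENNReal.ofReal (R ^ ((n:ℝ) + a)) := by
  set Z : Set (Eu n) := s ∩ {y | ρ y = 0} with hZ
  set S : ℕ → Set (Eu n) := fun k => s ∩ {y | R / 2^(k+1) ≤ ρ y ∧ ρ y ≤ R / 2^k} with hS
  have hcov : s ⊆ Z ∪ ⋃ k, S k := by
    intro y hy
    rcases eq_or_lt_of_le (hρ0 y) with h0 | h0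
    · exact Or.inl ⟨hy, h0.symm⟩
    · obtain ⟨k, h1, h2⟩ := exists_dyadic_down h0 (hs hy)
      exact Or.inr (mem_iUnion.2 ⟨k, hy, h1, h2⟩)
  have hZm : MeasurableSet Z := hsm.inter (hρ (measurableSet_singleton 0))
  have hSm : ∀ k, MeasurableSet (S k) := fun k =>
    hsm.inter ((measurableSet_le measurable_const hρ).inter
      (measurableSet_le hρ measurable_const))
  have hZ0 : ∫⁻ y in Z, f y = 0 := by
    have : ∫⁻ y in Z, f y ≤ ∫⁻ _ in Z, (0 : ℝ≥0∞) := by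
      apply setLIntegral_mono_ae' hZm
      filter_upwards [hf] with y h hy
      refine (h hy.1).trans_eq ?_
      rw [hy.2, Real.zero_rpow ha2.ne, ENNReal.ofReal_zero, mul_zero]
    simpa using this
  have hbound : ∀ k, ∫⁻ y in S k, f y ≤
      (ENNReal.ofReal c₀ * ENNReal.ofReal ((R / 2^(k+1)) ^ a)) *
        (ENNReal.ofReal ((R / 2^k) ^ (n:ℝ)) * V) := by
    intro k
    have hpos : (0:ℝ) < R / 2^(k+1) := by positivity
    have h1 : ∫⁻ y in S k, f y ≤
        ∫⁻ _ in S k, (ENNReal.ofReal c₀ * ENNReal.ofReal ((R / 2^(k+1)) ^ a)) := by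
      apply setLIntegral_mono_ae' (hSm k)
      filter_upwards [hf] with y h hy
      refine (h hy.1).trans ?_
      exact mul_le_mul_right (ENNReal.ofReal_le_ofReal
        (Real.rpow_le_rpow_of_nonpos hpos hy.2.1 ha2.le)) _
    rw [setLIntegral_const] at h1
    refine h1.trans ?_
    gcongr
    refine (measure_mono (fun y hy => hy.2.2 : S k ⊆ {y | ρ y ≤ R / 2^k})).trans ?_
    exact hV _ (by positivity)
  calc ∫⁻ y in s, f y ≤ ∫⁻ y in Z ∪ ⋃ k, S k, f y := lintegral_mono_set hcov
    _ ≤ (∫⁻ y in Z, f y) + ∫⁻ y in ⋃ k, S k, f y := lintegral_union_le _ _ _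
    _ ≤ 0 + ∑' k, ∫⁻ y in S k, f y := by
        rw [hZ0]; gcongr; exact lintegral_iUnion_le _ _
    _ = ∑' k, ∫⁻ y in S k, f y := by rw [zero_add]
    _ ≤ ∑' k, (ENNReal.ofReal c₀ * ENNReal.ofReal ((R / 2^(k+1)) ^ a)) *
        (ENNReal.ofReal ((R / 2^k) ^ (n:ℝ)) * V) := ENNReal.tsum_le_tsum hbound
    _ = ∑' k, (ENNReal.ofReal c₀ * (ENNReal.ofReal (2 ^ (-a)) * V) *
          ENNReal.ofReal (R ^ ((n:ℝ) + a))) * ENNReal.ofReal (2 ^ (-((n:ℝ) + a))) ^ k := by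
      refine tsum_congr fun k => ?_
      rw [← ENNReal.ofReal_pow (by positivity),
        show ENNReal.ofReal c₀ * ENNReal.ofReal ((R / 2^(k+1)) ^ a) *
          (ENNReal.ofReal ((R / 2^k) ^ (n:ℝ)) * V) =
          ENNReal.ofReal c₀ * V * (ENNReal.ofReal ((R / 2^(k+1)) ^ a) *
            ENNReal.ofReal ((R / 2^k) ^ (n:ℝ))) by ring,
        ← ENNReal.ofReal_mul (by positivity), pow_algebra_down a hR k,
        ENNReal.ofReal_mul (by positivity), ENNReal.ofReal_mul (by positivity)]
      ring
    _ = (ENNReal.ofReal c₀ * (ENNReal.ofReal (2 ^ (-a)) * V) *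
          ENNReal.ofReal (R ^ ((n:ℝ) + a))) *
          (1 - ENNReal.ofReal (2 ^ (-((n:ℝ) + a))))⁻¹ := by
      rw [ENNReal.tsum_mul_left, ENNReal.tsum_geometric]
    _ = ENNReal.ofReal c₀ * (ENNReal.ofReal (2 ^ (-a)) * V *
        (1 - ENNReal.ofReal (2 ^ (-((n:ℝ) + a))))⁻¹) * ENNReal.ofReal (R ^ ((n:ℝ) + a)) := by
      ring

/-! ### Volume estimates and constants -/

lemma geom_ne_top {u : ℝ} (hu : u < 0) : (1 - ENNReal.ofReal (2 ^ u))⁻¹ ≠ ⊤ := by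
  rw [Ne, ENNReal.inv_eq_top, tsub_eq_zero_iff_le, not_le]
  exact ENNReal.ofReal_lt_one.2 (Real.rpow_lt_one_of_one_lt_of_neg one_lt_two hu)

lemma half_rpow {u : ℝ} (hu : 0 ≤ u) (s : ℝ) :
    (u / 2) ^ s = 2 ^ (-s) * u ^ s := by
  rw [div_eq_mul_inv, Real.mul_rpow hu (by positivity), Real.inv_rpow (by norm_num : (0:ℝ) ≤ 2),
    ← Real.rpow_neg (by norm_num : (0:ℝ) ≤ 2)]
  ring

lemma massage (κ : ℝ≥0∞) {p q d e : ℝ} (hp : 0 ≤ p) (hd : 0 ≤ d)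
    (h : p * q = d * e) :
    ENNReal.ofReal p * κ * ENNReal.ofReal q = ENNReal.ofReal d * κ * ENNReal.ofReal e := by
  have h1 : ENNReal.ofReal p * ENNReal.ofReal q = ENNReal.ofReal d * ENNReal.ofReal e := by
    rw [← ENNReal.ofReal_mul hp, ← ENNReal.ofReal_mul hd, h]
  calc ENNReal.ofReal p * κ * ENNReal.ofReal q
      = κ * (ENNReal.ofReal p * ENNReal.ofReal q) := by ring
    _ = κ * (ENNReal.ofReal d * ENNReal.ofReal e) := by rw [h1]
    _ = ENNReal.ofReal d * κ * ENNReal.ofReal e := by ring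

lemma vol_closed (x : Eu n) {t : ℝ} (ht : 0 < t) :
    volume {y : Eu n | ‖x - y‖ ≤ t} ≤
      ENNReal.ofReal (t ^ (n:ℝ)) * volume (ball (0:Eu n) 1) := by
  have e : {y : Eu n | ‖x - y‖ ≤ t} = closedBall x t := by
    ext y
    simp [Metric.mem_closedBall, dist_eq_norm, norm_sub_rev x y]
  rw [e, Measure.addHaar_closedBall volume x ht.le, finrank_euclideanSpace_fin,
    Real.rpow_natCast]

lemma vol_norm_zero {t : ℝ} (ht : 0 < t) :
    volume {y : Eu n | ‖y‖ ≤ t} ≤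
      ENNReal.ofReal (t ^ (n:ℝ)) * volume (ball (0:Eu n) 1) := by
  have e : {y : Eu n | ‖y‖ ≤ t} = {y : Eu n | ‖(0:Eu n) - y‖ ≤ t} := by
    ext y; simp
  rw [e]; exact vol_closed 0 ht

lemma vol_jb {t : ℝ} (ht : 0 < t) :
    volume {y : Eu n | jb y ≤ t} ≤
      ENNReal.ofReal (t ^ (n:ℝ)) * volume (ball (0:Eu n) 1) := by
  refine le_trans (measure_mono fun y hy => ?_) (vol_norm_zero ht)
  exact le_trans (norm_le_jb y) hy

lemma meas_norm_sub (x : Eu n) : Measurable fun y : Eu n => ‖x - y‖ :=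
  (measurable_const.sub measurable_id).norm

/-! ### The four regions -/

lemma regionA (hn : 3 ≤ n) {c : ℝ} (hc1 : 1 < c) :
    ∃ M : ℝ≥0∞, M ≠ ⊤ ∧ ∀ x : Eu n,
      ∫⁻ y in {y : Eu n | ‖x - y‖ ≤ jb x / 2},
        ENNReal.ofReal (‖x - y‖ ^ (1 - (n:ℝ))) * ENNReal.ofReal (jb y ^ (-c)) ∂volume
        ≤ M * ENNReal.ofReal (jb x ^ (1 - c)) := by
  have hn3 : (3:ℝ) ≤ (n:ℝ) := by exact_mod_cast hn
  set V := volume (ball (0:Eu n) 1) with hV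
  set κ := ENNReal.ofReal (2 ^ (-(1 - (n:ℝ)))) * V *
    (1 - ENNReal.ofReal (2 ^ (-((n:ℝ) + (1 - (n:ℝ))))))⁻¹ with hκ
  have hκfin : κ ≠ ⊤ := by
    refine ENNReal.mul_ne_top (ENNReal.mul_ne_top ENNReal.ofReal_ne_top
      measure_ball_lt_top.ne) (geom_ne_top ?_)
    rw [show -((n:ℝ) + (1 - (n:ℝ))) = -1 by ring]; norm_num
  refine ⟨ENNReal.ofReal (2 ^ (c - 1)) * κ, ENNReal.mul_ne_top ENNReal.ofReal_ne_top hκfin,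
    fun x => ?_⟩
  have hjx : (0:ℝ) < jb x / 2 := by
    have := jb_pos x; linarith
  have hmain := dyadic_ball (n := n) (fun y => ‖x - y‖) (meas_norm_sub x) V
    (fun t ht => vol_closed x ht) (show 1 - (n:ℝ) < 0 by linarith) hjx
    (fun y => ENNReal.ofReal (‖x - y‖ ^ (1 - (n:ℝ))) * ENNReal.ofReal (jb y ^ (-c)))
    ((jb x / 2) ^ (-c))
    {y : Eu n | ‖x - y‖ ≤ jb x / 2}
    (measurableSet_le (meas_norm_sub x) measurable_const)
    (fun y hy => hy) (fun y => norm_nonneg _)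
    (Filter.Eventually.of_forall (fun y hy => ?_))
  · refine hmain.trans_eq ?_
    refine massage κ (by positivity) (by positivity) ?_
    rw [show (n:ℝ) + (1 - (n:ℝ)) = (1:ℝ) by ring,
      ← Real.rpow_add hjx, show -c + 1 = 1 - c by ring, half_rpow (jb_pos x).le,
      show -(1 - c) = c - 1 by ring]
  · -- pointwise bound on region A
    have hd : jb x / 2 ≤ jb y := by
      have h1 := jb_lipschitz x y
      have h2 : ‖x - y‖ ≤ jb x / 2 := hy
      linarith
    rw [mul_comm]
    refine mul_le_mul_left (ENNReal.ofReal_le_ofReal ?_) _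
    exact Real.rpow_le_rpow_of_nonpos hjx hd (by linarith)

lemma ae_ne_zero (hn : 3 ≤ n) : ∀ᵐ y : Eu n ∂volume, y ≠ (0:Eu n) := by
  have h00 : volume ({(0:Eu n)} : Set (Eu n)) = 0 := by
    have e : ({(0:Eu n)} : Set (Eu n)) = closedBall (0:Eu n) 0 := by simp
    rw [e, Measure.addHaar_closedBall volume _ le_rfl, finrank_euclideanSpace_fin,
      zero_pow (by omega : n ≠ 0)]
    simp
  rw [ae_iff]
  simpa [not_not, Set.setOf_eq_eq_singleton] using h00

lemma regionB1 (hn : 3 ≤ n) {c : ℝ} (hc1 : 1 < c) (hc2 : c < (n:ℝ)) :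
    ∃ M : ℝ≥0∞, M ≠ ⊤ ∧ ∀ x : Eu n,
      ∫⁻ y in {y : Eu n | jb x / 2 ≤ ‖x - y‖ ∧ jb y ≤ jb x},
        ENNReal.ofReal (‖x - y‖ ^ (1 - (n:ℝ))) * ENNReal.ofReal (jb y ^ (-c)) ∂volume
        ≤ M * ENNReal.ofReal (jb x ^ (1 - c)) := by
  have hn3 : (3:ℝ) ≤ (n:ℝ) := by exact_mod_cast hn
  set V := volume (ball (0:Eu n) 1) with hV
  set κ := ENNReal.ofReal (2 ^ (-(-c))) * V *
    (1 - ENNReal.ofReal (2 ^ (-((n:ℝ) + -c))))⁻¹ with hκ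
  have hκfin : κ ≠ ⊤ := by
    refine ENNReal.mul_ne_top (ENNReal.mul_ne_top ENNReal.ofReal_ne_top
      measure_ball_lt_top.ne) (geom_ne_top ?_)
    linarith
  refine ⟨ENNReal.ofReal (2 ^ ((n:ℝ) - 1)) * κ, ENNReal.mul_ne_top ENNReal.ofReal_ne_top hκfin,
    fun x => ?_⟩
  have hjpx : (0:ℝ) < jb x := jb_pos x
  have hjx : (0:ℝ) < jb x / 2 := by linarith
  have hmain := dyadic_ball (n := n) (fun y => ‖y‖) measurable_norm V
    (fun t ht => vol_norm_zero ht) (show -c < 0 by linarith) hjpx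
    (fun y => ENNReal.ofReal (‖x - y‖ ^ (1 - (n:ℝ))) * ENNReal.ofReal (jb y ^ (-c)))
    ((jb x / 2) ^ (1 - (n:ℝ)))
    {y : Eu n | jb x / 2 ≤ ‖x - y‖ ∧ jb y ≤ jb x}
    ((measurableSet_le measurable_const (meas_norm_sub x)).inter
      (measurableSet_le measurable_jb measurable_const))
    (fun y hy => le_trans (norm_le_jb y) hy.2) (fun y => norm_nonneg _) ?_
  · refine hmain.trans_eq ?_
    refine massage κ (by positivity) (by positivity) ?_
    rw [half_rpow hjpx.le, show -(1 - (n:ℝ)) = (n:ℝ) - 1 by ring, mul_assoc,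
      ← Real.rpow_add hjpx, show (1 - (n:ℝ)) + ((n:ℝ) + -c) = 1 - c by ring]
  · filter_upwards [ae_ne_zero hn] with y hy0 hy
    refine mul_le_mul' (ENNReal.ofReal_le_ofReal ?_) (ENNReal.ofReal_le_ofReal ?_)
    · exact Real.rpow_le_rpow_of_nonpos hjx hy.1 (by linarith)
    · exact Real.rpow_le_rpow_of_nonpos (norm_pos_iff.2 hy0) (norm_le_jb y) (by linarith)

lemma regionB2 (hn : 3 ≤ n) {c : ℝ} (hc1 : 1 < c) :
    ∃ M : ℝ≥0∞, M ≠ ⊤ ∧ ∀ x : Eu n,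
      ∫⁻ y in {y : Eu n | jb x ≤ jb y ∧ jb y ≤ ‖x - y‖},
        ENNReal.ofReal (‖x - y‖ ^ (1 - (n:ℝ))) * ENNReal.ofReal (jb y ^ (-c)) ∂volume
        ≤ M * ENNReal.ofReal (jb x ^ (1 - c)) := by
  have hn3 : (3:ℝ) ≤ (n:ℝ) := by exact_mod_cast hn
  set V := volume (ball (0:Eu n) 1) with hV
  have hκfin : ENNReal.ofReal (2 ^ (n:ℝ)) * V *
      (1 - ENNReal.ofReal (2 ^ ((n:ℝ) + (1 - (n:ℝ) - c))))⁻¹ ≠ ⊤ := by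
    refine ENNReal.mul_ne_top (ENNReal.mul_ne_top ENNReal.ofReal_ne_top
      measure_ball_lt_top.ne) (geom_ne_top ?_)
    linarith
  refine ⟨ENNReal.ofReal (2 ^ (n:ℝ)) * V *
    (1 - ENNReal.ofReal (2 ^ ((n:ℝ) + (1 - (n:ℝ) - c))))⁻¹, hκfin, fun x => ?_⟩
  have hjpx : (0:ℝ) < jb x := jb_pos x
  have hmain := dyadic_tail (n := n) jb measurable_jb V
    (fun t ht => vol_jb ht) (show (n:ℝ) + (1 - (n:ℝ) - c) < 0 by linarith) hjpx
    (fun y => ENNReal.ofReal (‖x - y‖ ^ (1 - (n:ℝ))) * ENNReal.ofReal (jb y ^ (-c)))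
    1
    {y : Eu n | jb x ≤ jb y ∧ jb y ≤ ‖x - y‖}
    ((measurableSet_le measurable_const measurable_jb).inter
      (measurableSet_le measurable_jb (meas_norm_sub x)))
    (fun y hy => hy.1) ?_
  · refine hmain.trans_eq ?_
    rw [ENNReal.ofReal_one, one_mul]
    congr 1
    rw [show (n:ℝ) + (1 - (n:ℝ) - c) = 1 - c by ring]
  · intro y hy
    rw [ENNReal.ofReal_one, one_mul,
      ← ENNReal.ofReal_mul (Real.rpow_nonneg (norm_nonneg _) _)]
    refine ENNReal.ofReal_le_ofReal ?_
    have h1 : ‖x - y‖ ^ (1 - (n:ℝ)) ≤ jb y ^ (1 - (n:ℝ)) :=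
      Real.rpow_le_rpow_of_nonpos (jb_pos y) hy.2 (by linarith)
    calc ‖x - y‖ ^ (1 - (n:ℝ)) * jb y ^ (-c) ≤ jb y ^ (1 - (n:ℝ)) * jb y ^ (-c) :=
          mul_le_mul_of_nonneg_right h1 (Real.rpow_nonneg (jb_pos y).le _)
      _ = jb y ^ (1 - (n:ℝ) - c) := by
          rw [← Real.rpow_add (jb_pos y), show (1 - (n:ℝ)) + -c = 1 - (n:ℝ) - c by ring]

lemma regionC (hn : 3 ≤ n) {c : ℝ} (hc1 : 1 < c) :
    ∃ M : ℝ≥0∞, M ≠ ⊤ ∧ ∀ x : Eu n,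
      ∫⁻ y in {y : Eu n | jb x / 2 ≤ ‖x - y‖ ∧ ‖x - y‖ ≤ jb y},
        ENNReal.ofReal (‖x - y‖ ^ (1 - (n:ℝ))) * ENNReal.ofReal (jb y ^ (-c)) ∂volume
        ≤ M * ENNReal.ofReal (jb x ^ (1 - c)) := by
  have hn3 : (3:ℝ) ≤ (n:ℝ) := by exact_mod_cast hn
  set ε := (1 + c) / 2 with hε
  have hε1 : 1 < ε := by rw [hε]; linarith
  have hεc : ε ≤ c := by rw [hε]; linarith
  set V := volume (ball (0:Eu n) 1) with hV
  set κ := ENNReal.ofReal (2 ^ (n:ℝ)) * V *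
    (1 - ENNReal.ofReal (2 ^ ((n:ℝ) + (1 - (n:ℝ) - ε))))⁻¹ with hκ
  have hκfin : κ ≠ ⊤ := by
    refine ENNReal.mul_ne_top (ENNReal.mul_ne_top ENNReal.ofReal_ne_top
      measure_ball_lt_top.ne) (geom_ne_top ?_)
    linarith
  refine ⟨ENNReal.ofReal (2 ^ (c - 1)) * κ, ENNReal.mul_ne_top ENNReal.ofReal_ne_top hκfin,
    fun x => ?_⟩
  have hjpx : (0:ℝ) < jb x := jb_pos x
  have hjx : (0:ℝ) < jb x / 2 := by linarith
  have hmain := dyadic_tail (n := n) (fun y => ‖x - y‖) (meas_norm_sub x) V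
    (fun t ht => vol_closed x ht) (show (n:ℝ) + (1 - (n:ℝ) - ε) < 0 by linarith) hjx
    (fun y => ENNReal.ofReal (‖x - y‖ ^ (1 - (n:ℝ))) * ENNReal.ofReal (jb y ^ (-c)))
    ((jb x / 2) ^ (ε - c))
    {y : Eu n | jb x / 2 ≤ ‖x - y‖ ∧ ‖x - y‖ ≤ jb y}
    ((measurableSet_le measurable_const (meas_norm_sub x)).inter
      (measurableSet_le (meas_norm_sub x) measurable_jb))
    (fun y hy => hy.1) ?_
  · refine hmain.trans_eq ?_
    refine massage κ (by positivity) (by positivity) ?_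
    rw [show (n:ℝ) + (1 - (n:ℝ) - ε) = 1 - ε by ring, ← Real.rpow_add hjx,
      show ε - c + (1 - ε) = 1 - c by ring, half_rpow hjpx.le,
      show -(1 - c) = c - 1 by ring]
  · intro y hy
    have hxypos : (0:ℝ) < ‖x - y‖ := lt_of_lt_of_le hjx hy.1
    have hjy2 : jb x / 2 ≤ jb y := le_trans hy.1 hy.2
    have hsplit : jb y ^ (-c) = jb y ^ (-ε) * jb y ^ (ε - c) := by
      rw [← Real.rpow_add (jb_pos y), show -ε + (ε - c) = -c by ring]
    have h1 : jb y ^ (-ε) ≤ ‖x - y‖ ^ (-ε) :=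
      Real.rpow_le_rpow_of_nonpos hxypos hy.2 (by linarith)
    have h2 : jb y ^ (ε - c) ≤ (jb x / 2) ^ (ε - c) :=
      Real.rpow_le_rpow_of_nonpos hjx hjy2 (by linarith)
    rw [← ENNReal.ofReal_mul (Real.rpow_nonneg (norm_nonneg _) _),
      ← ENNReal.ofReal_mul (Real.rpow_nonneg hjx.le _)]
    refine ENNReal.ofReal_le_ofReal ?_
    calc ‖x - y‖ ^ (1 - (n:ℝ)) * jb y ^ (-c)
        = ‖x - y‖ ^ (1 - (n:ℝ)) * (jb y ^ (-ε) * jb y ^ (ε - c)) := by rw [hsplit]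
      _ ≤ ‖x - y‖ ^ (1 - (n:ℝ)) * (‖x - y‖ ^ (-ε) * (jb x / 2) ^ (ε - c)) := by
          refine mul_le_mul_of_nonneg_left ?_ (Real.rpow_nonneg (norm_nonneg _) _)
          exact mul_le_mul h1 h2 (Real.rpow_nonneg (jb_pos y).le _)
            (Real.rpow_nonneg hxypos.le _)
      _ = (jb x / 2) ^ (ε - c) * (‖x - y‖ ^ (1 - (n:ℝ)) * ‖x - y‖ ^ (-ε)) := by ring
      _ = (jb x / 2) ^ (ε - c) * ‖x - y‖ ^ (1 - (n:ℝ) - ε) := by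
          rw [← Real.rpow_add hxypos, show (1 - (n:ℝ)) + -ε = 1 - (n:ℝ) - ε by ring]

/-! ### The kernel estimate -/

lemma kernel_est (hn : 3 ≤ n) {c : ℝ} (hc1 : 1 < c) (hc2 : c < (n:ℝ)) :
    ∃ M : ℝ≥0∞, M ≠ ⊤ ∧ ∀ x : Eu n,
      ∫⁻ y, ENNReal.ofReal (‖x - y‖ ^ (1 - (n:ℝ))) * ENNReal.ofReal (jb y ^ (-c)) ∂volume
        ≤ M * ENNReal.ofReal (jb x ^ (1 - c)) := by
  obtain ⟨MA, hMA, hA⟩ := regionA hn hc1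
  obtain ⟨MB1, hMB1, hB1⟩ := regionB1 hn hc1 hc2
  obtain ⟨MB2, hMB2, hB2⟩ := regionB2 hn hc1
  obtain ⟨MC, hMC, hC⟩ := regionC hn hc1
  refine ⟨MA + MB1 + MB2 + MC, by
    exact ENNReal.add_ne_top.2 ⟨ENNReal.add_ne_top.2 ⟨ENNReal.add_ne_top.2 ⟨hMA, hMB1⟩,
      hMB2⟩, hMC⟩, fun x => ?_⟩
  set g : Eu n → ℝ≥0∞ :=
    fun y => ENNReal.ofReal (‖x - y‖ ^ (1 - (n:ℝ))) * ENNReal.ofReal (jb y ^ (-c)) with hg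
  set A := {y : Eu n | ‖x - y‖ ≤ jb x / 2} with hsA
  set B1 := {y : Eu n | jb x / 2 ≤ ‖x - y‖ ∧ jb y ≤ jb x} with hsB1
  set B2 := {y : Eu n | jb x ≤ jb y ∧ jb y ≤ ‖x - y‖} with hsB2
  set C := {y : Eu n | jb x / 2 ≤ ‖x - y‖ ∧ ‖x - y‖ ≤ jb y} with hsC
  have hcov : (univ : Set (Eu n)) ⊆ A ∪ B1 ∪ B2 ∪ C := by
    intro y _
    by_cases h1 : ‖x - y‖ ≤ jb x / 2
    · exact Or.inl (Or.inl (Or.inl h1))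
    push_neg at h1
    by_cases h2 : ‖x - y‖ ≤ jb y
    · exact Or.inr ⟨h1.le, h2⟩
    push_neg at h2
    by_cases h3 : jb y ≤ jb x
    · exact Or.inl (Or.inl (Or.inr ⟨h1.le, h3⟩))
    push_neg at h3
    exact Or.inl (Or.inr ⟨h3.le, h2.le⟩)
  calc ∫⁻ y, g y ∂volume = ∫⁻ y in univ, g y ∂volume := (setLIntegral_univ _).symm
    _ ≤ ∫⁻ y in A ∪ B1 ∪ B2 ∪ C, g y ∂volume := lintegral_mono_set hcov
    _ ≤ (∫⁻ y in A ∪ B1 ∪ B2, g y ∂volume) + ∫⁻ y in C, g y ∂volume :=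
        lintegral_union_le _ _ _
    _ ≤ ((∫⁻ y in A ∪ B1, g y ∂volume) + ∫⁻ y in B2, g y ∂volume) +
          ∫⁻ y in C, g y ∂volume :=
        add_le_add_left (lintegral_union_le _ _ _) _
    _ ≤ (((∫⁻ y in A, g y ∂volume) + ∫⁻ y in B1, g y ∂volume) +
          ∫⁻ y in B2, g y ∂volume) + ∫⁻ y in C, g y ∂volume :=
        add_le_add_left (add_le_add_left (lintegral_union_le _ _ _) _) _
    _ ≤ (((MA * ENNReal.ofReal (jb x ^ (1 - c))) +
          MB1 * ENNReal.ofReal (jb x ^ (1 - c))) +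
          MB2 * ENNReal.ofReal (jb x ^ (1 - c))) +
          MC * ENNReal.ofReal (jb x ^ (1 - c)) := by
        exact add_le_add (add_le_add (add_le_add (hA x) (hB1 x)) (hB2 x)) (hC x)
    _ = (MA + MB1 + MB2 + MC) * ENNReal.ofReal (jb x ^ (1 - c)) := by ring

/-! ### The weight and kernel, Schur test -/

def Kk (n : ℕ) (x y : Eu n) : ℝ≥0∞ :=
  ENNReal.ofReal (‖x - y‖ ^ (1 - (n:ℝ))) * ENNReal.ofReal (jb y ^ (-1 : ℝ))

def ww (n : ℕ) (x : Eu n) : ℝ≥0∞ := ENNReal.ofReal (jb x ^ (-(3/2) : ℝ))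

lemma ww_ne_zero (x : Eu n) : ww n x ≠ 0 := by
  rw [ww, Ne, ENNReal.ofReal_eq_zero, not_le]
  exact Real.rpow_pos_of_pos (jb_pos x) _

lemma ww_ne_top (x : Eu n) : ww n x ≠ ⊤ := ENNReal.ofReal_ne_top

lemma meas_ww : Measurable (ww n) := by
  apply ENNReal.measurable_ofReal.comp
  exact measurable_jb.pow measurable_const

lemma meas_Kk_uncurry : Measurable (Function.uncurry (Kk n)) := by
  have h1 : Continuous (fun p : Eu n × Eu n => ‖p.1 - p.2‖) :=
    (continuous_fst.sub continuous_snd).norm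
  have h2 : Measurable (fun p : Eu n × Eu n => ENNReal.ofReal (‖p.1 - p.2‖ ^ (1 - (n:ℝ)))) :=
    ENNReal.measurable_ofReal.comp (h1.measurable.pow measurable_const)
  have h3 : Measurable (fun p : Eu n × Eu n => ENNReal.ofReal (jb p.2 ^ (-1:ℝ))) :=
    ENNReal.measurable_ofReal.comp ((measurable_jb.comp measurable_snd).pow measurable_const)
  exact h2.mul h3

lemma meas_Kk_left (x : Eu n) : Measurable (fun y => Kk n x y) := by
  simp only [Kk]
  refine Measurable.mul (M := ℝ≥0∞) ?_ ?_
  · exact ENNReal.measurable_ofReal.comp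
      ((((continuous_const.sub continuous_id).norm).measurable).pow measurable_const)
  · exact ENNReal.measurable_ofReal.comp (measurable_jb.pow measurable_const)

lemma meas_Kk_right (y : Eu n) : Measurable (fun x => Kk n x y) := by
  simp only [Kk]
  refine Measurable.mul (M := ℝ≥0∞) ?_ ?_
  · exact ENNReal.measurable_ofReal.comp
      ((((continuous_id.sub continuous_const).norm).measurable).pow measurable_const)
  · exact measurable_const

lemma schur_row (hn : 3 ≤ n) :
    ∃ M : ℝ≥0∞, M ≠ ⊤ ∧ ∀ x : Eu n, ∫⁻ y, Kk n x y * ww n y ∂volume ≤ M * ww n x := by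
  have hn3 : (3:ℝ) ≤ (n:ℝ) := by exact_mod_cast hn
  obtain ⟨M, hM, hb⟩ := kernel_est (c := 5/2) hn (by norm_num) (by linarith)
  refine ⟨M, hM, fun x => ?_⟩
  have h1 : ∀ y, Kk n x y * ww n y =
      ENNReal.ofReal (‖x - y‖ ^ (1 - (n:ℝ))) * ENNReal.ofReal (jb y ^ (-(5/2) : ℝ)) := by
    intro y
    rw [Kk, ww, mul_assoc, ← ENNReal.ofReal_mul (Real.rpow_nonneg (jb_pos y).le _),
      ← Real.rpow_add (jb_pos y), show (-1 : ℝ) + -(3/2) = -(5/2) by norm_num]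
  rw [lintegral_congr h1]
  refine (hb x).trans_eq ?_
  rw [ww, show (1 - 5/2 : ℝ) = -(3/2) by norm_num]

lemma schur_col (hn : 3 ≤ n) :
    ∃ M : ℝ≥0∞, M ≠ ⊤ ∧ ∀ y : Eu n, ∫⁻ x, Kk n x y * ww n x ∂volume ≤ M * ww n y := by
  have hn3 : (3:ℝ) ≤ (n:ℝ) := by exact_mod_cast hn
  obtain ⟨M, hM, hb⟩ := kernel_est (c := 3/2) hn (by norm_num) (by linarith)
  refine ⟨M, hM, fun y => ?_⟩
  have h1 : ∀ x, Kk n x y * ww n x = ENNReal.ofReal (jb y ^ (-1 : ℝ)) *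
      (ENNReal.ofReal (‖y - x‖ ^ (1 - (n:ℝ))) * ENNReal.ofReal (jb x ^ (-(3/2) : ℝ))) := by
    intro x
    rw [Kk, ww, norm_sub_rev x y]
    ring
  rw [lintegral_congr h1, lintegral_const_mul' _ _ ENNReal.ofReal_ne_top]
  calc ENNReal.ofReal (jb y ^ (-1 : ℝ)) *
        ∫⁻ x, ENNReal.ofReal (‖y - x‖ ^ (1 - (n:ℝ))) * ENNReal.ofReal (jb x ^ (-(3/2) : ℝ)) ∂volume
      ≤ ENNReal.ofReal (jb y ^ (-1 : ℝ)) * (M * ENNReal.ofReal (jb y ^ (1 - 3/2 : ℝ))) :=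
        mul_le_mul_right (hb y) _
    _ = M * ww n y := by
        rw [show ENNReal.ofReal (jb y ^ (-1:ℝ)) * (M * ENNReal.ofReal (jb y ^ (1 - 3/2 : ℝ))) =
          M * (ENNReal.ofReal (jb y ^ (-1:ℝ)) * ENNReal.ofReal (jb y ^ (1 - 3/2 : ℝ))) by ring,
          ← ENNReal.ofReal_mul (Real.rpow_nonneg (jb_pos y).le _),
          ← Real.rpow_add (jb_pos y), show (-1 : ℝ) + (1 - 3/2) = -(3/2) by norm_num, ww]

lemma rpow_half_sq (A : ℝ≥0∞) : (A ^ (1/2 : ℝ)) ^ (2:ℕ) = A := by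
  rw [← ENNReal.rpow_natCast _ 2, ← ENNReal.rpow_mul]
  norm_num

lemma schur_bound (hn : 3 ≤ n) :
    ∃ M : ℝ≥0∞, M ≠ ⊤ ∧ ∀ f : Eu n → ℝ≥0∞, Measurable f →
      ∫⁻ x, (∫⁻ y, Kk n x y * f y ∂volume) ^ (2:ℕ) ∂volume ≤
        M * ∫⁻ y, f y ^ (2:ℕ) ∂volume := by
  obtain ⟨Mr, hMr, hrow⟩ := schur_row hn
  obtain ⟨Mc, hMc, hcol⟩ := schur_col hn
  refine ⟨Mr * Mc, ENNReal.mul_ne_top hMr hMc, fun f hf => ?_⟩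
  have hpq : (2:ℝ).HolderConjugate 2 := Real.HolderConjugate.two_two
  -- pointwise Cauchy-Schwarz
  have hCS : ∀ x, (∫⁻ y, Kk n x y * f y ∂volume) ^ (2:ℕ) ≤
      (∫⁻ y, Kk n x y * ww n y ∂volume) *
        ∫⁻ y, Kk n x y * (ww n y)⁻¹ * f y ^ (2:ℕ) ∂volume := by
    intro x
    set g1 : Eu n → ℝ≥0∞ := fun y => (Kk n x y * ww n y) ^ (1/2 : ℝ) with hg1
    set g2 : Eu n → ℝ≥0∞ :=
      fun y => (Kk n x y * (ww n y)⁻¹ * f y ^ (2:ℕ)) ^ (1/2 : ℝ) with hg2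
    have hkey : ∀ y, Kk n x y * f y = g1 y * g2 y := by
      intro y
      rw [hg1, hg2]
      dsimp only
      rw [← ENNReal.mul_rpow_of_nonneg _ _ (by norm_num : (0:ℝ) ≤ 1/2),
        show Kk n x y * ww n y * (Kk n x y * (ww n y)⁻¹ * f y ^ (2:ℕ)) =
          (ww n y * (ww n y)⁻¹) * ((Kk n x y * f y) ^ (2:ℕ)) by ring,
        ENNReal.mul_inv_cancel (ww_ne_zero y) (ww_ne_top y), one_mul,
        ← ENNReal.rpow_natCast _ 2, ← ENNReal.rpow_mul]
      norm_num
    have hg1m : AEMeasurable g1 volume :=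
      (((meas_Kk_left x).mul meas_ww).pow measurable_const).aemeasurable
    have hg2m : AEMeasurable g2 volume := by
      apply Measurable.aemeasurable
      exact (((meas_Kk_left x).mul meas_ww.inv).mul (hf.pow measurable_const)).pow
        measurable_const
    have hold := ENNReal.lintegral_mul_le_Lp_mul_Lq volume hpq hg1m hg2m
    simp only [Pi.mul_apply] at hold
    rw [lintegral_congr hkey]
    have h1 : ∀ y, g1 y ^ (2:ℝ) = Kk n x y * ww n y := by
      intro y
      rw [hg1]
      dsimp only
      rw [← ENNReal.rpow_mul]
      norm_num
    have h2 : ∀ y, g2 y ^ (2:ℝ) = Kk n x y * (ww n y)⁻¹ * f y ^ (2:ℕ) := by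
      intro y
      rw [hg2]
      dsimp only
      rw [← ENNReal.rpow_mul]
      norm_num
    simp only [h1, h2] at hold
    calc (∫⁻ y, g1 y * g2 y ∂volume) ^ (2:ℕ)
        ≤ ((∫⁻ y, Kk n x y * ww n y ∂volume) ^ (1/2 : ℝ) *
            (∫⁻ y, Kk n x y * (ww n y)⁻¹ * f y ^ (2:ℕ) ∂volume) ^ (1/2 : ℝ)) ^ (2:ℕ) := by
          rw [pow_two, pow_two]
          exact mul_le_mul' hold hold
      _ = (∫⁻ y, Kk n x y * ww n y ∂volume) *
            ∫⁻ y, Kk n x y * (ww n y)⁻¹ * f y ^ (2:ℕ) ∂volume := by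
          rw [mul_pow, rpow_half_sq, rpow_half_sq]
  -- main chain
  have huncurry : Measurable (fun p : Eu n × Eu n =>
      ww n p.1 * (Kk n p.1 p.2 * (ww n (p.2))⁻¹ * f p.2 ^ (2:ℕ))) := by
    apply (meas_ww.comp measurable_fst).mul
    exact (meas_Kk_uncurry.mul ((meas_ww.comp measurable_snd).inv)).mul
      ((hf.comp measurable_snd).pow measurable_const)
  calc ∫⁻ x, (∫⁻ y, Kk n x y * f y ∂volume) ^ (2:ℕ) ∂volume
      ≤ ∫⁻ x, Mr * (ww n x * ∫⁻ y, Kk n x y * (ww n y)⁻¹ * f y ^ (2:ℕ) ∂volume) ∂volume := by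
        refine lintegral_mono fun x => ?_
        refine (hCS x).trans ?_
        rw [← mul_assoc]
        exact mul_le_mul_left (hrow x) _
    _ = Mr * ∫⁻ x, ww n x * ∫⁻ y, Kk n x y * (ww n y)⁻¹ * f y ^ (2:ℕ) ∂volume ∂volume :=
        lintegral_const_mul' _ _ hMr
    _ = Mr * ∫⁻ x, ∫⁻ y, ww n x * (Kk n x y * (ww n y)⁻¹ * f y ^ (2:ℕ)) ∂volume ∂volume := by
        congr 1
        refine lintegral_congr fun x => ?_
        exact (lintegral_const_mul' _ _ (ww_ne_top x)).symm
    _ = Mr * ∫⁻ y, ∫⁻ x, ww n x * (Kk n x y * (ww n y)⁻¹ * f y ^ (2:ℕ)) ∂volume ∂volume := by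
        congr 1
        exact lintegral_lintegral_swap huncurry.aemeasurable
    _ = Mr * ∫⁻ y, ((ww n y)⁻¹ * f y ^ (2:ℕ)) * ∫⁻ x, Kk n x y * ww n x ∂volume ∂volume := by
        congr 1
        refine lintegral_congr fun y => ?_
        rw [← lintegral_const_mul ((ww n y)⁻¹ * f y ^ (2:ℕ)) (by exact (meas_Kk_right y).mul meas_ww : Measurable fun x => Kk n x y * ww n x)]
        refine lintegral_congr fun x => ?_
        ring
    _ ≤ Mr * ∫⁻ y, ((ww n y)⁻¹ * f y ^ (2:ℕ)) * (Mc * ww n y) ∂volume := by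
        refine mul_le_mul_right (lintegral_mono fun y => ?_) _
        exact mul_le_mul_right (hcol y) _
    _ = Mr * ∫⁻ y, Mc * f y ^ (2:ℕ) ∂volume := by
        congr 1
        refine lintegral_congr fun y => ?_
        rw [show ((ww n y)⁻¹ * f y ^ (2:ℕ)) * (Mc * ww n y) =
          Mc * (f y ^ (2:ℕ) * ((ww n y)⁻¹ * ww n y)) by ring,
          ENNReal.inv_mul_cancel (ww_ne_zero y) (ww_ne_top y), mul_one]
    _ = Mr * Mc * ∫⁻ y, f y ^ (2:ℕ) ∂volume := by
        rw [lintegral_const_mul' _ _ hMc, mul_assoc]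

/-! ### Main estimate for measurable integrands -/

lemma main_est (hn : 3 ≤ n) {Mh : ℝ≥0∞} {M : ℝ≥0∞} (hMh : Mh = M ^ (1/2 : ℝ))
    (hS : ∀ f : Eu n → ℝ≥0∞, Measurable f →
      ∫⁻ x, (∫⁻ y, Kk n x y * f y ∂volume) ^ (2:ℕ) ∂volume ≤
        M * ∫⁻ y, f y ^ (2:ℕ) ∂volume)
    (φ0 : Eu n → ℝ) (hφ0 : StronglyMeasurable φ0) :
    AEStronglyMeasurable (fun x : Eu n => ∫ y : Eu n,
        ‖x - y‖ ^ (1 - (n : ℝ)) * Real.sqrt (1 + ‖y‖ ^ 2) ^ (-(1 : ℝ)) * φ0 y) volume ∧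
    eLpNorm (fun x : Eu n => ∫ y : Eu n,
        ‖x - y‖ ^ (1 - (n : ℝ)) * Real.sqrt (1 + ‖y‖ ^ 2) ^ (-(1 : ℝ)) * φ0 y) 2 volume ≤
      Mh * eLpNorm φ0 2 volume := by
  have h1 : ∀ x y : Eu n, (0:ℝ) ≤ ‖x - y‖ ^ (1 - (n : ℝ)) :=
    fun x y => Real.rpow_nonneg (norm_nonneg _) _
  have h2 : ∀ y : Eu n, (0:ℝ) ≤ Real.sqrt (1 + ‖y‖ ^ 2) ^ (-(1 : ℝ)) :=
    fun y => Real.rpow_nonneg (Real.sqrt_nonneg _) _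
  -- strong measurability of the output
  have hFm : Measurable (fun p : Eu n × Eu n =>
      ‖p.1 - p.2‖ ^ (1 - (n : ℝ)) * Real.sqrt (1 + ‖p.2‖ ^ 2) ^ (-(1 : ℝ)) * φ0 p.2) := by
    refine Measurable.mul (Measurable.mul ?_ ?_) (hφ0.measurable.comp measurable_snd)
    · exact ((continuous_fst.sub continuous_snd).norm.measurable).pow measurable_const
    · exact ((measurable_jb (F := Eu n)).comp measurable_snd).pow measurable_const
  have hsm : AEStronglyMeasurable (fun x : Eu n => ∫ y : Eu n,
      ‖x - y‖ ^ (1 - (n : ℝ)) * Real.sqrt (1 + ‖y‖ ^ 2) ^ (-(1 : ℝ)) * φ0 y) volume :=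
    (hFm.stronglyMeasurable.integral_prod_right').aestronglyMeasurable
  refine ⟨hsm, ?_⟩
  -- pointwise domination by the ENNReal kernel operator
  have key : ∀ x : Eu n, (‖∫ y : Eu n,
      ‖x - y‖ ^ (1 - (n : ℝ)) * Real.sqrt (1 + ‖y‖ ^ 2) ^ (-(1 : ℝ)) * φ0 y‖₊ : ℝ≥0∞) ≤
      ∫⁻ y, Kk n x y * (‖φ0 y‖₊ : ℝ≥0∞) ∂volume := by
    intro x
    refine le_trans (enorm_integral_le_lintegral_enorm _) (le_of_eq (lintegral_congr
      fun y => ?_))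
    rw [enorm_mul,
      Real.enorm_eq_ofReal (mul_nonneg (h1 x y) (h2 y)),
      ENNReal.ofReal_mul (h1 x y)]
    rfl
  have hfm : Measurable (fun y : Eu n => (‖φ0 y‖₊ : ℝ≥0∞)) :=
    hφ0.measurable.nnnorm.coe_nnreal_ennreal
  have step1 := (lintegral_mono fun x => pow_le_pow_left₀ zero_le (key x) 2).trans
    (hS _ hfm)
  -- convert to eLpNorm
  rw [eLpNorm_eq_lintegral_rpow_enorm_toReal (by norm_num) (by norm_num),
    eLpNorm_eq_lintegral_rpow_enorm_toReal (by norm_num) (by norm_num)]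
  have hconv : ∀ z : ℝ≥0∞, z ^ ((2:ℝ≥0∞).toReal) = z ^ (2:ℕ) := fun z => by
    rw [← ENNReal.rpow_natCast z 2]
    norm_num
  simp_rw [hconv]
  have honehalf : 1 / (2:ℝ≥0∞).toReal = (1/2 : ℝ) := by norm_num
  rw [honehalf]
  calc (∫⁻ x, (‖∫ y : Eu n,
        ‖x - y‖ ^ (1 - (n : ℝ)) * Real.sqrt (1 + ‖y‖ ^ 2) ^ (-(1 : ℝ)) * φ0 y‖₊ : ℝ≥0∞) ^ (2:ℕ)
        ∂volume) ^ (1/2 : ℝ)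
      ≤ (M * ∫⁻ y, (‖φ0 y‖₊ : ℝ≥0∞) ^ (2:ℕ) ∂volume) ^ (1/2 : ℝ) :=
        ENNReal.rpow_le_rpow step1 (by norm_num)
    _ = Mh * (∫⁻ y, (‖φ0 y‖₊ : ℝ≥0∞) ^ (2:ℕ) ∂volume) ^ (1/2 : ℝ) := by
        rw [ENNReal.mul_rpow_of_nonneg _ _ (by norm_num : (0:ℝ) ≤ 1/2), hMh]

end S19

theorem stmt19 (n : ℕ) (hn : 3 ≤ n) :
    ∃ C : ℝ, 0 < C ∧ ∀ φ : EuclideanSpace ℝ (Fin n) → ℝ,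
      MemLp φ 2 volume →
      MemLp (fun x : EuclideanSpace ℝ (Fin n) =>
          ∫ y : EuclideanSpace ℝ (Fin n),
            ‖x - y‖ ^ (1 - (n : ℝ)) * Real.sqrt (1 + ‖y‖ ^ 2) ^ (-(1 : ℝ)) * φ y)
        2 volume ∧
      eLpNorm (fun x : EuclideanSpace ℝ (Fin n) =>
          ∫ y : EuclideanSpace ℝ (Fin n),
            ‖x - y‖ ^ (1 - (n : ℝ)) * Real.sqrt (1 + ‖y‖ ^ 2) ^ (-(1 : ℝ)) * φ y)
          2 volume
        ≤ ENNReal.ofReal C * eLpNorm φ 2 volume := by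
  classical
  obtain ⟨M, hM, hS⟩ := S19.schur_bound hn
  set Mh := M ^ (1/2 : ℝ) with hMh
  have hMhne : Mh ≠ ⊤ := by
    rw [hMh]
    exact ENNReal.rpow_ne_top_of_nonneg (by norm_num) hM
  have hCpos : (0:ℝ) < Mh.toReal + 1 := by positivity
  refine ⟨Mh.toReal + 1, hCpos, fun φ hφ => ?_⟩
  have hC : Mh ≤ ENNReal.ofReal (Mh.toReal + 1) := by
    calc Mh = ENNReal.ofReal Mh.toReal := (ENNReal.ofReal_toReal hMhne).symm
      _ ≤ _ := ENNReal.ofReal_le_ofReal (by linarith [ENNReal.toReal_nonneg (a := Mh)])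
  -- measurable representative
  have hsm0 := hφ.aestronglyMeasurable
  set φ' := hsm0.mk φ with hφ'
  have hφ'sm : StronglyMeasurable φ' := hsm0.stronglyMeasurable_mk
  have hae : φ =ᵐ[volume] φ' := hsm0.ae_eq_mk
  have hφ'mem : MemLp φ' 2 volume := hφ.ae_eq hae
  have hψeq : (fun x : EuclideanSpace ℝ (Fin n) =>
      ∫ y : EuclideanSpace ℝ (Fin n),
        ‖x - y‖ ^ (1 - (n : ℝ)) * Real.sqrt (1 + ‖y‖ ^ 2) ^ (-(1 : ℝ)) * φ y) =
      (fun x : EuclideanSpace ℝ (Fin n) =>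
      ∫ y : EuclideanSpace ℝ (Fin n),
        ‖x - y‖ ^ (1 - (n : ℝ)) * Real.sqrt (1 + ‖y‖ ^ 2) ^ (-(1 : ℝ)) * φ' y) := by
    funext x
    refine integral_congr_ae (hae.mono fun y hy => ?_)
    dsimp only
    rw [hy]
  obtain ⟨hmA, hmB⟩ := S19.main_est hn hMh hS φ' hφ'sm
  have hnorm' : eLpNorm φ' 2 volume = eLpNorm φ 2 volume := eLpNorm_congr_ae hae.symm
  constructor
  · rw [hψeq]
    refine ⟨hmA, lt_of_le_of_lt hmB ?_⟩
    rw [hnorm']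
    exact ENNReal.mul_lt_top hMhne.lt_top hφ.2
  · rw [hψeq]
    calc eLpNorm _ 2 volume ≤ Mh * eLpNorm φ' 2 volume := hmB
      _ = Mh * eLpNorm φ 2 volume := by rw [hnorm']
      _ ≤ ENNReal.ofReal (Mh.toReal + 1) * eLpNorm φ 2 volume := mul_le_mul_left hC _
end
end
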